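/- arXiv:2401.09651 — 5 statements merged into one kernel-verified Lean document; each statement's English description precedes it below -/
import Mathlib

section
/- Suppose the feasible set Ω is nonempty and contained in the closed Euclidean ball of radius C > 0 centered at the origin. Then for every w ≥ 0 (componentwise) the regularized LCQP has a unique minimizer ν*(w) over Ω, and the map w ↦ ν*(w) is Lipschitz continuous on the nonnegative orthant with constant (1+2C)/ε: for all w₁, w₂ ∈ ℝ^r with w₁ ≥ 0 and w₂ ≥ 0, ‖ν*(w₂) − ν*(w₁)‖₂ ≤ ((1+2C)/ε)·‖w₂ − w₁‖₂. -/
open Matrix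

/-- Euclidean (ℓ₂) norm of a finite real vector. -/
noncomputable def l2norm {k : ℕ} (v : Fin k → ℝ) : ℝ := Real.sqrt (∑ i, v i ^ 2)

namespace LCQPAux

def toE {k : ℕ} (v : Fin k → ℝ) : EuclideanSpace ℝ (Fin k) := WithLp.toLp 2 v

lemma l2norm_eq_norm {k : ℕ} (v : Fin k → ℝ) : l2norm v = ‖toE v‖ := by
  rw [EuclideanSpace.norm_eq]
  simp [l2norm, toE, Real.norm_eq_abs, sq_abs]

lemma dot_eq_inner {k : ℕ} (u v : Fin k → ℝ) :
    u ⬝ᵥ v = (inner ℝ (toE u) (toE v) : ℝ) := by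
  simp [dotProduct, PiLp.inner_apply, toE, RCLike.inner_apply, mul_comm]

lemma l2norm_nonneg {k : ℕ} (v : Fin k → ℝ) : 0 ≤ l2norm v := Real.sqrt_nonneg _

lemma l2norm_eq_zero {k : ℕ} {v : Fin k → ℝ} (h : l2norm v = 0) : v = 0 := by
  rw [l2norm_eq_norm] at h
  have h2 : toE v = (0 : EuclideanSpace ℝ (Fin k)) := norm_eq_zero.mp h
  exact (WithLp.toLp_eq_zero 2).mp h2

lemma dot_le {k : ℕ} (u v : Fin k → ℝ) : u ⬝ᵥ v ≤ l2norm u * l2norm v := by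
  rw [dot_eq_inner, l2norm_eq_norm, l2norm_eq_norm]
  exact real_inner_le_norm _ _

lemma l2norm_sq {k : ℕ} (v : Fin k → ℝ) : v ⬝ᵥ v = l2norm v ^ 2 := by
  rw [dot_eq_inner, l2norm_eq_norm, real_inner_self_eq_norm_sq]

lemma l2norm_neg {k : ℕ} (v : Fin k → ℝ) : l2norm (-v) = l2norm v := by
  rw [l2norm_eq_norm, l2norm_eq_norm]
  rw [show toE (-v) = -toE v by simp [toE]]
  exact norm_neg (toE v)

lemma l2norm_add_le {k : ℕ} (u v : Fin k → ℝ) : l2norm (u + v) ≤ l2norm u + l2norm v := by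
  rw [l2norm_eq_norm, l2norm_eq_norm, l2norm_eq_norm]
  rw [show toE (u + v) = toE u + toE v by simp [toE]]
  exact norm_add_le (toE u) (toE v)

lemma abs_le_l2norm {k : ℕ} (v : Fin k → ℝ) (i : Fin k) : |v i| ≤ l2norm v := by
  rw [← Real.sqrt_sq_eq_abs]
  exact Real.sqrt_le_sqrt (Finset.single_le_sum (f := fun j => v j ^ 2)
    (fun j _ => sq_nonneg _) (Finset.mem_univ i))

lemma diag_dot {k : ℕ} {A : Matrix (Fin k) (Fin k) ℝ} (hA : A.IsDiag) (x y : Fin k → ℝ) :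
    x ⬝ᵥ A.mulVec y = ∑ i, A i i * x i * y i := by
  unfold dotProduct Matrix.mulVec
  refine Finset.sum_congr rfl fun i _ => ?_
  rw [show A i ⬝ᵥ y = ∑ j, A i j * y j from rfl,
    Finset.sum_eq_single i (fun j _ hj => by rw [hA (Ne.symm hj), zero_mul]) (by simp)]
  ring

end LCQPAux

open LCQPAux in
/-- Lipschitz continuity of the unique minimizer of the
regularized LCQP with respect to the nonnegative symbolic weights. -/
theorem lcqp_minimizer_lipschitz
    (N M r : ℕ) (hN : 0 < N) (hM : 0 < M) (hr : 0 < r)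
    (ε : ℝ) (hε : 0 < ε)
    (A : Matrix (Fin M) (Fin N) ℝ) (b : Fin M → ℝ)
    (Ω : Set (Fin N → ℝ))
    (hΩ : Ω = {ν | ∀ i, A.mulVec ν i + b i ≤ 0})
    (D : (Fin r → ℝ) →ₗ[ℝ] Matrix (Fin N) (Fin N) ℝ)
    (hDdiag : ∀ w, (D w).IsDiag)
    (hDpsd : ∀ w : Fin r → ℝ, 0 ≤ w → (D w).PosSemidef)
    (hDbound : ∀ (w : Fin r → ℝ) (ν : Fin N → ℝ),
      l2norm ((D w).mulVec ν) ≤ l2norm w * l2norm ν)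
    (c : (Fin r → ℝ) →ₗ[ℝ] (Fin N → ℝ))
    (hcbound : ∀ w : Fin r → ℝ, l2norm (c w) ≤ l2norm w)
    (f : (Fin N → ℝ) → (Fin r → ℝ) → ℝ)
    (hf : ∀ ν w, f ν w =
      ν ⬝ᵥ ((D w + ε • (1 : Matrix (Fin N) (Fin N) ℝ)).mulVec ν) + c w ⬝ᵥ ν)
    (C : ℝ) (hC : 0 < C)
    (hΩne : Ω.Nonempty)
    (hΩball : ∀ ν ∈ Ω, l2norm ν ≤ C) :
    ∃ νstar : (Fin r → ℝ) → (Fin N → ℝ),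
      (∀ w : Fin r → ℝ, 0 ≤ w →
        νstar w ∈ Ω ∧ (∀ ν ∈ Ω, f (νstar w) w ≤ f ν w) ∧
        (∀ ν ∈ Ω, (∀ ν' ∈ Ω, f ν w ≤ f ν' w) → ν = νstar w)) ∧
      (∀ w₁ w₂ : Fin r → ℝ, 0 ≤ w₁ → 0 ≤ w₂ →
        l2norm (νstar w₂ - νstar w₁) ≤ ((1 + 2 * C) / ε) * l2norm (w₂ - w₁)) := by
  -- basic properties of Ω
  have hconv : Convex ℝ Ω := by
    rw [hΩ]
    intro x hx y hy a a' ha ha' haa i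
    have h1 : A.mulVec (a • x + a' • y) i = a * A.mulVec x i + a' * A.mulVec y i := by
      simp [Matrix.mulVec_add, Matrix.mulVec_smul]
    have hb2 : a * b i + a' * b i = b i := by rw [← add_mul, haa, one_mul]
    have hx' := hx i
    have hy' := hy i
    have t1 : a * (A.mulVec x i + b i) ≤ 0 := mul_nonpos_of_nonneg_of_nonpos ha hx'
    have t2 : a' * (A.mulVec y i + b i) ≤ 0 := mul_nonpos_of_nonneg_of_nonpos ha' hy'
    simp only [Set.mem_setOf_eq] at *
    rw [h1]
    nlinarith [t1, t2]
  have hcA : ∀ i, Continuous fun ν : Fin N → ℝ => A.mulVec ν i := fun i => by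
    simp only [Matrix.mulVec, dotProduct]
    exact continuous_finset_sum _ fun j _ => continuous_const.mul (continuous_apply j)
  have hclosed : IsClosed Ω := by
    rw [hΩ, show {ν : Fin N → ℝ | ∀ i, A.mulVec ν i + b i ≤ 0}
        = ⋂ i, {ν | A.mulVec ν i + b i ≤ 0} by ext; simp]
    exact isClosed_iInter fun i => isClosed_le ((hcA i).add continuous_const) continuous_const
  have hsub : Ω ⊆ Metric.closedBall 0 C := fun ν hν => by
    rw [Metric.mem_closedBall, dist_zero_right]
    refine (pi_norm_le_iff_of_nonneg hC.le).mpr fun i => ?_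
    exact (abs_le_l2norm ν i).trans (hΩball ν hν)
  have hcompact : IsCompact Ω :=
    Metric.isCompact_of_isClosed_isBounded hclosed (Metric.isBounded_closedBall.subset hsub)
  have hcontf : ∀ w, Continuous fun ν => f ν w := by
    intro w
    have : (fun ν => f ν w) = fun ν =>
        ν ⬝ᵥ ((D w + ε • (1 : Matrix (Fin N) (Fin N) ℝ)).mulVec ν) + c w ⬝ᵥ ν :=
      funext fun ν => hf ν w
    rw [this]
    simp only [Matrix.mulVec, dotProduct]
    refine Continuous.add ?_ ?_
    · exact continuous_finset_sum _ fun i _ => (continuous_apply i).mul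
        (continuous_finset_sum _ fun j _ => continuous_const.mul (continuous_apply j))
    · exact continuous_finset_sum _ fun i _ => continuous_const.mul (continuous_apply i)
  have hexists : ∀ w, ∃ ν ∈ Ω, ∀ μ ∈ Ω, f ν w ≤ f μ w := fun w => by
    obtain ⟨x, hx, hminx⟩ := hcompact.exists_isMinOn hΩne (hcontf w).continuousOn
    exact ⟨x, hx, fun μ hμ => hminx hμ⟩
  choose νstar hmem hmin using hexists
  -- strong convexity at the minimizer
  have hstrong : ∀ w, 0 ≤ w → ∀ ν ∈ Ω,
      f (νstar w) w + (ε/2) * l2norm (ν - νstar w) ^ 2 ≤ f ν w := by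
    intro w hw ν hν
    set p := νstar w with hp
    have hmid : (1/2 : ℝ) • ν + (1/2 : ℝ) • p ∈ Ω :=
      hconv hν (hmem w) (by norm_num) (by norm_num) (by norm_num)
    have hfm := hmin w _ hmid
    have hid : f ν w + f p w - 2 * f ((1/2:ℝ) • ν + (1/2:ℝ) • p) w
        = (1/2) * ((ν - p) ⬝ᵥ (D w + ε • (1 : Matrix (Fin N) (Fin N) ℝ)).mulVec (ν - p)) := by
      simp only [hf, Matrix.mulVec_add, Matrix.mulVec_sub, Matrix.mulVec_smul,
        dotProduct_add, dotProduct_sub, dotProduct_smul,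
        add_dotProduct, sub_dotProduct, smul_dotProduct, smul_eq_mul]
      ring
    have hquad : ε * l2norm (ν - p) ^ 2 ≤
        (ν - p) ⬝ᵥ (D w + ε • (1 : Matrix (Fin N) (Fin N) ℝ)).mulVec (ν - p) := by
      have h1 : (ν - p) ⬝ᵥ (D w + ε • (1 : Matrix (Fin N) (Fin N) ℝ)).mulVec (ν - p)
          = (ν - p) ⬝ᵥ (D w).mulVec (ν - p) + ε * ((ν - p) ⬝ᵥ (ν - p)) := by
        simp [Matrix.add_mulVec, Matrix.smul_mulVec, Matrix.one_mulVec,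
          dotProduct_add, dotProduct_smul, smul_eq_mul]
      have h2 : 0 ≤ (ν - p) ⬝ᵥ (D w).mulVec (ν - p) := by
        have := (hDpsd w hw).dotProduct_mulVec_nonneg (ν - p)
        simpa using this
      rw [h1, l2norm_sq]
      linarith
    linarith
  refine ⟨νstar, fun w hw => ⟨hmem w, hmin w, ?_⟩, ?_⟩
  · -- uniqueness
    intro ν hν hνmin
    have h1 := hstrong w hw ν hν
    have h2 := hνmin (νstar w) (hmem w)
    have hsq : l2norm (ν - νstar w) ^ 2 ≤ 0 := by nlinarith
    have hz : l2norm (ν - νstar w) = 0 := by nlinarith [l2norm_nonneg (ν - νstar w)]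
    exact sub_eq_zero.mp (l2norm_eq_zero hz)
  · -- Lipschitz
    intro w₁ w₂ hw₁ hw₂
    set ν₁ := νstar w₁ with hν₁
    set ν₂ := νstar w₂ with hν₂
    set dd := ν₂ - ν₁ with hdd
    set t := l2norm dd with ht
    set Δ := w₁ - w₂ with hΔ
    have htnn : 0 ≤ t := l2norm_nonneg dd
    have hδ : l2norm Δ = l2norm (w₂ - w₁) := by
      rw [show Δ = -(w₂ - w₁) by rw [neg_sub], l2norm_neg]
    have hsymmn : l2norm (ν₁ - ν₂) = t := by
      rw [show ν₁ - ν₂ = -dd by rw [hdd, neg_sub], l2norm_neg]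
    have h1 := hstrong w₁ hw₁ ν₂ (hmem w₂)
    have h2 := hstrong w₂ hw₂ ν₁ (hmem w₁)
    rw [hsymmn] at h2
    have hdiff : ∀ ν, f ν w₁ - f ν w₂ = ν ⬝ᵥ (D Δ).mulVec ν + c Δ ⬝ᵥ ν := by
      intro ν
      simp only [hf, hΔ, map_sub, Matrix.sub_mulVec, Matrix.add_mulVec,
        dotProduct_add, dotProduct_sub, sub_dotProduct]
      ring
    have halg : ν₂ ⬝ᵥ (D Δ).mulVec ν₂ - ν₁ ⬝ᵥ (D Δ).mulVec ν₁
        = dd ⬝ᵥ (D Δ).mulVec (ν₂ + ν₁) := by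
      rw [diag_dot (hDdiag Δ), diag_dot (hDdiag Δ), diag_dot (hDdiag Δ),
        ← Finset.sum_sub_distrib]
      refine Finset.sum_congr rfl fun i _ => ?_
      simp only [hdd, Pi.add_apply, Pi.sub_apply]
      ring
    have hcd : c Δ ⬝ᵥ dd = c Δ ⬝ᵥ ν₂ - c Δ ⬝ᵥ ν₁ := by
      rw [hdd, dotProduct_sub]
    have hcomb : (f ν₂ w₁ - f ν₂ w₂) + (f ν₁ w₂ - f ν₁ w₁)
        = dd ⬝ᵥ (D Δ).mulVec (ν₂ + ν₁) + c Δ ⬝ᵥ dd := by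
      linear_combination (hdiff ν₂) - (hdiff ν₁) + halg - hcd
    have hsum2C : l2norm (ν₂ + ν₁) ≤ 2 * C := by
      have := l2norm_add_le ν₂ ν₁
      have b1 := hΩball ν₂ (hmem w₂)
      have b2 := hΩball ν₁ (hmem w₁)
      linarith
    have hb1 : dd ⬝ᵥ (D Δ).mulVec (ν₂ + ν₁) ≤ t * (l2norm (w₂ - w₁) * (2 * C)) := by
      calc dd ⬝ᵥ (D Δ).mulVec (ν₂ + ν₁)
          ≤ t * l2norm ((D Δ).mulVec (ν₂ + ν₁)) := dot_le _ _
        _ ≤ t * (l2norm Δ * l2norm (ν₂ + ν₁)) :=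
            mul_le_mul_of_nonneg_left (hDbound Δ _) htnn
        _ ≤ t * (l2norm (w₂ - w₁) * (2 * C)) := by
            rw [hδ]
            exact mul_le_mul_of_nonneg_left
              (mul_le_mul_of_nonneg_left hsum2C (l2norm_nonneg _)) htnn
    have hb2 : c Δ ⬝ᵥ dd ≤ l2norm (w₂ - w₁) * t := by
      calc c Δ ⬝ᵥ dd ≤ l2norm (c Δ) * t := dot_le _ _
        _ ≤ l2norm (w₂ - w₁) * t := by
            rw [← hδ]
            exact mul_le_mul_of_nonneg_right (hcbound Δ) htnn
    have hfinal : ε * t ^ 2 ≤ (1 + 2 * C) * l2norm (w₂ - w₁) * t := by nlinarith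
    rcases eq_or_lt_of_le htnn with htz | htpos
    · rw [← htz]
      exact mul_nonneg (div_nonneg (by linarith) hε.le) (l2norm_nonneg _)
    · rw [div_mul_eq_mul_div, le_div_iff₀ hε]
      have : (ε * t) * t ≤ ((1 + 2 * C) * l2norm (w₂ - w₁)) * t := by nlinarith
      have h3 := le_of_mul_le_mul_right this htpos
      linarith
end

section
/- Suppose the feasible set Ω is nonempty and compact. Then for every w ∈ ℝ^r with w ≥ 0 the regularized LCQP has a unique minimizer ν*(w) over Ω, the optimal value function V : ℝ^r → ℝ is (Fréchet) differentiable at w, and its gradient is given by the partial derivatives of the objective at the minimizer: for each k ∈ {1,…,r}, (∇V(w))_k = ν*(w)ᵀ D(e_k) ν*(w) + c(e_k)ᵀ ν*(w), where e_k is the k-th standard basis vector of ℝ^r. -/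
open Matrix

noncomputable def lcqpE2 {n : ℕ} (v : Fin n → ℝ) : ℝ := Real.sqrt (∑ i, v i ^ 2)

lemma lcqpE2_nonneg {n : ℕ} (v : Fin n → ℝ) : 0 ≤ lcqpE2 v := Real.sqrt_nonneg _

lemma lcqpE2_sq {n : ℕ} (v : Fin n → ℝ) : lcqpE2 v ^ 2 = ∑ i, v i ^ 2 :=
  Real.sq_sqrt (by positivity)

lemma lcqpE2_cs {n : ℕ} (x y : Fin n → ℝ) : |x ⬝ᵥ y| ≤ lcqpE2 x * lcqpE2 y := by
  have h1 := Real.sum_mul_le_sqrt_mul_sqrt Finset.univ x y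
  have h2 := Real.sum_mul_le_sqrt_mul_sqrt Finset.univ (fun i => -x i) y
  simp only [neg_mul, Finset.sum_neg_distrib, neg_sq] at h2
  have hd : x ⬝ᵥ y = ∑ i, x i * y i := rfl
  rw [abs_le, hd]
  unfold lcqpE2
  constructor <;> linarith

lemma lcqp_quad_mid {n : ℕ} (B : Matrix (Fin n) (Fin n) ℝ) (lc x y : Fin n → ℝ) :
    (((1/2:ℝ) • (x+y)) ⬝ᵥ B.mulVec ((1/2:ℝ) • (x+y)) + lc ⬝ᵥ ((1/2:ℝ) • (x+y)))
      = ((x ⬝ᵥ B.mulVec x + lc ⬝ᵥ x) + (y ⬝ᵥ B.mulVec y + lc ⬝ᵥ y))/2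
        - ((1/2:ℝ) • (x-y)) ⬝ᵥ B.mulVec ((1/2:ℝ) • (x-y)) := by
  simp only [Matrix.mulVec_smul, Matrix.mulVec_add, Matrix.mulVec_sub,
    smul_dotProduct, dotProduct_smul, add_dotProduct,
    dotProduct_add, sub_dotProduct, dotProduct_sub, smul_eq_mul]
  ring

lemma lcqpE2_cont {n : ℕ} : Continuous fun v : Fin n → ℝ => lcqpE2 v := by
  unfold lcqpE2
  exact (continuous_finset_sum _ fun i _ => (continuous_apply i).pow 2).sqrt

set_option maxHeartbeats 1000000 in
/-- For nonnegative weights the regularized LCQP over a nonempty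
compact feasible set has a unique minimizer, the optimal value function is
Fréchet differentiable, and its partial derivatives are given by evaluating the
(weight-linear parts of the) objective at the minimizer. -/
theorem lcqp_value_differentiable_in_weights
    (N M r : ℕ) (hN : 0 < N) (hM : 0 < M) (hr : 0 < r)
    (ε : ℝ) (hε : 0 < ε)
    (A : Matrix (Fin M) (Fin N) ℝ) (b : Fin M → ℝ)
    (Ω : Set (Fin N → ℝ))
    (hΩ : Ω = {ν | ∀ i, A.mulVec ν i + b i ≤ 0})
    (D : (Fin r → ℝ) →ₗ[ℝ] Matrix (Fin N) (Fin N) ℝ)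
    (hDdiag : ∀ w, (D w).IsDiag)
    (hDpsd : ∀ w : Fin r → ℝ, 0 ≤ w → (D w).PosSemidef)
    (hDbound : ∀ (w : Fin r → ℝ) (ν : Fin N → ℝ),
      Real.sqrt (∑ i, (D w).mulVec ν i ^ 2) ≤
        Real.sqrt (∑ k, w k ^ 2) * Real.sqrt (∑ i, ν i ^ 2))
    (c : (Fin r → ℝ) →ₗ[ℝ] (Fin N → ℝ))
    (hcbound : ∀ w : Fin r → ℝ,
      Real.sqrt (∑ i, c w i ^ 2) ≤ Real.sqrt (∑ k, w k ^ 2))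
    (f : (Fin N → ℝ) → (Fin r → ℝ) → ℝ)
    (hf : ∀ ν w, f ν w =
      ν ⬝ᵥ ((D w + ε • (1 : Matrix (Fin N) (Fin N) ℝ)).mulVec ν) + c w ⬝ᵥ ν)
    (V : (Fin r → ℝ) → ℝ)
    (hV : ∀ w, V w = sInf ((fun ν => f ν w) '' Ω))
    (hΩne : Ω.Nonempty) (hΩcompact : IsCompact Ω) :
    ∃ νstar : (Fin r → ℝ) → (Fin N → ℝ),
      ∀ w : Fin r → ℝ, 0 ≤ w →
        (νstar w ∈ Ω ∧ (∀ ν ∈ Ω, f (νstar w) w ≤ f ν w) ∧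
          (∀ ν ∈ Ω, (∀ ν' ∈ Ω, f ν w ≤ f ν' w) → ν = νstar w)) ∧
        ∃ L : (Fin r → ℝ) →L[ℝ] ℝ, HasFDerivAt V L w ∧
          ∀ k : Fin r, L (Pi.single k 1) =
            νstar w ⬝ᵥ (D (Pi.single k 1)).mulVec (νstar w) +
              c (Pi.single k 1) ⬝ᵥ νstar w := by
  classical
  -- continuity of the objective
  have hcont : ∀ w : Fin r → ℝ, Continuous fun ν => f ν w := by
    intro w
    have hfw : (fun ν : Fin N → ℝ => f ν w)
        = fun ν => ν ⬝ᵥ ((D w + ε • (1 : Matrix (Fin N) (Fin N) ℝ)).mulVec ν) + c w ⬝ᵥ ν :=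
      funext fun ν => hf ν w
    rw [hfw]
    apply Continuous.add
    · simp only [dotProduct, Matrix.mulVec]
      exact continuous_finset_sum _ fun i _ =>
        (continuous_apply i).mul
          (continuous_finset_sum _ fun j _ => continuous_const.mul (continuous_apply j))
    · exact continuous_finset_sum _ fun i _ => continuous_const.mul (continuous_apply i)
  -- existence of minimizers for every weight vector
  have hmin : ∀ w : Fin r → ℝ, ∃ ν ∈ Ω, ∀ ν' ∈ Ω, f ν w ≤ f ν' w := by
    intro w
    obtain ⟨ν, hν, hm⟩ := hΩcompact.exists_isMinOn hΩne (hcont w).continuousOn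
    exact ⟨ν, hν, fun ν' hν' => hm hν'⟩
  set νs : (Fin r → ℝ) → (Fin N → ℝ) := fun w => (hmin w).choose with hνs
  have hνsΩ : ∀ w, νs w ∈ Ω := fun w => (hmin w).choose_spec.1
  have hνsmin : ∀ w, ∀ ν' ∈ Ω, f (νs w) w ≤ f ν' w := fun w => (hmin w).choose_spec.2
  clear_value νs
  -- V is attained at the minimizer
  have hVeq : ∀ w, V w = f (νs w) w := by
    intro w
    have hleast : IsLeast ((fun ν => f ν w) '' Ω) (f (νs w) w) := by
      constructor
      · exact ⟨νs w, hνsΩ w, rfl⟩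
      · rintro z ⟨ν, hν, rfl⟩
        exact hνsmin w ν hν
    rw [hV, hleast.csInf_eq]
  -- midpoint convexity of Ω
  have hmid : ∀ x ∈ Ω, ∀ y ∈ Ω, (1/2:ℝ) • (x + y) ∈ Ω := by
    intro x hx y hy
    rw [hΩ] at hx hy ⊢
    intro i
    have h1 := hx i
    have h2 := hy i
    have hA : A.mulVec ((1/2:ℝ) • (x + y)) i
        = (1/2) * (A.mulVec x i + A.mulVec y i) := by
      rw [Matrix.mulVec_smul, Matrix.mulVec_add]
      simp [smul_eq_mul]
    simp only [Set.mem_setOf_eq] at *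
    rw [hA]; linarith
  -- the weight-linear part of the objective
  set φ : (Fin N → ℝ) → (Fin r → ℝ) → ℝ :=
    fun ν u => ν ⬝ᵥ (D u).mulVec ν + c u ⬝ᵥ ν with hφ
  clear_value φ
  -- shift identity
  have hshift : ∀ (ν : Fin N → ℝ) (w u : Fin r → ℝ), f ν (w + u) = f ν w + φ ν u := by
    intro ν w u
    rw [hf, hf]
    simp only [hφ, map_add]
    simp only [Matrix.add_mulVec, dotProduct_add, add_dotProduct]
    ring
  -- Lipschitz-type bound for φ in ν
  have hφdiff : ∀ (u : Fin r → ℝ) (x y : Fin N → ℝ),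
      |φ x u - φ y u| ≤ lcqpE2 u * lcqpE2 (x - y) * (lcqpE2 x + lcqpE2 y + 1) := by
    intro u x y
    have hid : φ x u - φ y u
        = (x - y) ⬝ᵥ (D u).mulVec x + y ⬝ᵥ (D u).mulVec (x - y) + c u ⬝ᵥ (x - y) := by
      simp only [hφ]
      simp only [sub_dotProduct, Matrix.mulVec_sub, dotProduct_sub]
      ring
    rw [hid]
    have hDu : ∀ v : Fin N → ℝ, lcqpE2 ((D u).mulVec v) ≤ lcqpE2 u * lcqpE2 v :=
      fun v => hDbound u v
    have hcu : lcqpE2 (c u) ≤ lcqpE2 u := hcbound u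
    have b1 : |(x - y) ⬝ᵥ (D u).mulVec x| ≤ lcqpE2 (x - y) * (lcqpE2 u * lcqpE2 x) :=
      (lcqpE2_cs _ _).trans (by
        exact mul_le_mul_of_nonneg_left (hDu x) (lcqpE2_nonneg _))
    have b2 : |y ⬝ᵥ (D u).mulVec (x - y)| ≤ lcqpE2 y * (lcqpE2 u * lcqpE2 (x - y)) :=
      (lcqpE2_cs _ _).trans (by
        exact mul_le_mul_of_nonneg_left (hDu (x - y)) (lcqpE2_nonneg _))
    have b3 : |c u ⬝ᵥ (x - y)| ≤ lcqpE2 u * lcqpE2 (x - y) :=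
      (lcqpE2_cs _ _).trans (by
        exact mul_le_mul_of_nonneg_right hcu (lcqpE2_nonneg _))
    have htri := abs_add_le ((x - y) ⬝ᵥ (D u).mulVec x + y ⬝ᵥ (D u).mulVec (x - y))
      (c u ⬝ᵥ (x - y))
    have htri2 := abs_add_le ((x - y) ⬝ᵥ (D u).mulVec x) (y ⬝ᵥ (D u).mulVec (x - y))
    nlinarith [lcqpE2_nonneg u, lcqpE2_nonneg (x - y), lcqpE2_nonneg x, lcqpE2_nonneg y]
  -- lower bound for the quadratic form at perturbed weights
  have hQlower : ∀ (w : Fin r → ℝ), 0 ≤ w → ∀ (u : Fin r → ℝ) (d : Fin N → ℝ),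
      (ε - lcqpE2 u) * ∑ i, d i ^ 2
        ≤ d ⬝ᵥ ((D (w + u) + ε • (1 : Matrix (Fin N) (Fin N) ℝ)).mulVec d) := by
    intro w hw u d
    have hpsd : 0 ≤ d ⬝ᵥ (D w).mulVec d := by
      have := (hDpsd w hw).dotProduct_mulVec_nonneg d
      simpa using this
    have hDu : |d ⬝ᵥ (D u).mulVec d| ≤ lcqpE2 d * (lcqpE2 u * lcqpE2 d) :=
      (lcqpE2_cs _ _).trans (mul_le_mul_of_nonneg_left (hDbound u d) (lcqpE2_nonneg _))
    have hsq : lcqpE2 d * lcqpE2 d = ∑ i, d i ^ 2 := by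
      rw [← lcqpE2_sq d]; ring
    have hone : d ⬝ᵥ ((ε • (1 : Matrix (Fin N) (Fin N) ℝ)).mulVec d) = ε * ∑ i, d i ^ 2 := by
      rw [Matrix.smul_mulVec, Matrix.one_mulVec, dotProduct_smul]
      simp only [smul_eq_mul, dotProduct]
      congr 1
      exact Finset.sum_congr rfl fun i _ => by ring
    have hsplit : d ⬝ᵥ ((D (w + u) + ε • (1 : Matrix (Fin N) (Fin N) ℝ)).mulVec d)
        = d ⬝ᵥ (D w).mulVec d + d ⬝ᵥ (D u).mulVec d + ε * ∑ i, d i ^ 2 := by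
      rw [map_add]
      simp only [Matrix.add_mulVec, dotProduct_add]
      rw [hone]
    rw [hsplit]
    have heq : lcqpE2 d * (lcqpE2 u * lcqpE2 d) = lcqpE2 u * ∑ i, d i ^ 2 := by
      rw [← hsq]; ring
    have hDu' : -(lcqpE2 u * ∑ i, d i ^ 2) ≤ d ⬝ᵥ (D u).mulVec d := by
      have h := (abs_le.mp hDu).1
      rw [heq] at h
      exact h
    rw [sub_mul]
    linarith [hpsd, hDu']
  -- the main construction
  refine ⟨νs, fun w hw => ?_⟩
  have hε2 : lcqpE2 (0 : Fin r → ℝ) = 0 := by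
    unfold lcqpE2; simp
  -- uniqueness at w
  have huniq : ∀ ν ∈ Ω, (∀ ν' ∈ Ω, f ν w ≤ f ν' w) → ν = νs w := by
    intro ν hν hνm
    have heq : f ν w = f (νs w) w :=
      le_antisymm (hνm (νs w) (hνsΩ w)) (hνsmin w ν hν)
    have hmide : f ((1/2:ℝ) • (ν + νs w)) w
        = (f ν w + f (νs w) w)/2
          - ((1/2:ℝ) • (ν - νs w)) ⬝ᵥ ((D w + ε • (1 : Matrix (Fin N) (Fin N) ℝ)).mulVec
              ((1/2:ℝ) • (ν - νs w))) := by
      rw [hf, hf, hf]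
      exact lcqp_quad_mid _ _ _ _
    have hge : f (νs w) w ≤ f ((1/2:ℝ) • (ν + νs w)) w :=
      hνsmin w _ (hmid ν hν (νs w) (hνsΩ w))
    have hQ0 : ((1/2:ℝ) • (ν - νs w)) ⬝ᵥ ((D w + ε • (1 : Matrix (Fin N) (Fin N) ℝ)).mulVec
        ((1/2:ℝ) • (ν - νs w))) ≤ 0 := by
      linarith [hge, hmide, heq]
    have hql := hQlower w hw 0 ((1/2:ℝ) • (ν - νs w))
    rw [add_zero, hε2, sub_zero] at hql
    have hsum : ∑ i, ((1/2:ℝ) • (ν - νs w)) i ^ 2 ≤ 0 := by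
      nlinarith [hql, hQ0, hε]
    have hzero : ∀ i, ((1/2:ℝ) • (ν - νs w)) i = 0 := by
      intro i
      have h1 : ∀ j ∈ Finset.univ, (0:ℝ) ≤ ((1/2:ℝ) • (ν - νs w)) j ^ 2 := fun j _ => sq_nonneg _
      have h2 : ∑ i, ((1/2:ℝ) • (ν - νs w)) i ^ 2 = 0 :=
        le_antisymm hsum (Finset.sum_nonneg h1)
      have := (Finset.sum_eq_zero_iff_of_nonneg h1).mp h2 i (Finset.mem_univ i)
      exact pow_eq_zero_iff (n := 2) (by norm_num) |>.mp this
    funext i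
    have h3 := hzero i
    simp only [Pi.smul_apply, Pi.sub_apply, smul_eq_mul] at h3
    linarith
  refine ⟨⟨hνsΩ w, hνsmin w, huniq⟩, ?_⟩
  -- bound on Ω
  obtain ⟨z, hzΩ, hzmax⟩ := hΩcompact.exists_isMaxOn hΩne lcqpE2_cont.continuousOn
  obtain ⟨R, hR, hR0⟩ : ∃ R : ℝ, (∀ ν ∈ Ω, lcqpE2 ν ≤ R) ∧ 0 ≤ R :=
    ⟨lcqpE2 z, fun ν hν => hzmax hν, lcqpE2_nonneg z⟩
  obtain ⟨C, hC, hC0⟩ : ∃ C : ℝ, C = 2 * R + 1 ∧ 0 < C := ⟨2 * R + 1, rfl, by linarith⟩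
  -- the derivative map
  set Lmap : (Fin r → ℝ) →ₗ[ℝ] ℝ :=
    { toFun := fun u => νs w ⬝ᵥ (D u).mulVec (νs w) + c u ⬝ᵥ (νs w)
      map_add' := by
        intro u v
        simp only [map_add, Matrix.add_mulVec, dotProduct_add, add_dotProduct]
        ring
      map_smul' := by
        intro a u
        simp only [_root_.map_smul, Matrix.smul_mulVec, dotProduct_smul,
          smul_dotProduct, smul_eq_mul, RingHom.id_apply]
        ring } with hLmap
  have hLu : ∀ u, (LinearMap.toContinuousLinearMap Lmap : (Fin r → ℝ) →L[ℝ] ℝ) u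
      = φ (νs w) u := by
    intro u
    rw [LinearMap.coe_toContinuousLinearMap']
    simp only [hφ, hLmap, LinearMap.coe_mk, AddHom.coe_mk]
  refine ⟨LinearMap.toContinuousLinearMap Lmap, ?_, fun k => by rw [hLu, hφ]⟩
  -- stability of the minimizer and the error bound
  have hkey : ∀ u : Fin r → ℝ, lcqpE2 u ≤ ε/2 →
      |V (w + u) - V w - φ (νs w) u| ≤ (4 * C ^ 2 / ε) * lcqpE2 u ^ 2 := by
    intro u hu
    have hs0 : 0 ≤ lcqpE2 (νs w - νs (w + u)) := lcqpE2_nonneg _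
    have hu0 : 0 ≤ lcqpE2 u := lcqpE2_nonneg _
    -- Lipschitz bound between the two φ's
    have hφb : |φ (νs w) u - φ (νs (w + u)) u| ≤ lcqpE2 u * lcqpE2 (νs w - νs (w + u)) * C := by
      have h := hφdiff u (νs w) (νs (w + u))
      have hb : lcqpE2 (νs w) + lcqpE2 (νs (w + u)) + 1 ≤ C := by
        have h1 := hR (νs w) (hνsΩ w)
        have h2 := hR (νs (w + u)) (hνsΩ (w + u))
        rw [hC]; linarith
      calc |φ (νs w) u - φ (νs (w + u)) u|
          ≤ lcqpE2 u * lcqpE2 (νs w - νs (w + u))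
            * (lcqpE2 (νs w) + lcqpE2 (νs (w + u)) + 1) := h
        _ ≤ lcqpE2 u * lcqpE2 (νs w - νs (w + u)) * C := by
            apply mul_le_mul_of_nonneg_left hb (by positivity)
    -- stability of the minimizer
    have hstab : lcqpE2 (νs w - νs (w + u)) ≤ (4 * C / ε) * lcqpE2 u := by
      have hmide : f ((1/2:ℝ) • (νs w + νs (w + u))) (w + u)
          = (f (νs w) (w + u) + f (νs (w + u)) (w + u))/2
            - ((1/2:ℝ) • (νs w - νs (w + u))) ⬝ᵥ
                ((D (w + u) + ε • (1 : Matrix (Fin N) (Fin N) ℝ)).mulVec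
                  ((1/2:ℝ) • (νs w - νs (w + u)))) := by
        rw [hf, hf, hf]
        exact lcqp_quad_mid _ _ _ _
      have hge : f (νs (w + u)) (w + u) ≤ f ((1/2:ℝ) • (νs w + νs (w + u))) (w + u) :=
        hνsmin (w + u) _ (hmid (νs w) (hνsΩ w) (νs (w + u)) (hνsΩ (w + u)))
      -- difference of optimal values
      have hdiff : f (νs w) (w + u) - f (νs (w + u)) (w + u)
          ≤ lcqpE2 u * lcqpE2 (νs w - νs (w + u)) * C := by
        have h1 : f (νs w) w ≤ f (νs (w + u)) w := hνsmin w (νs (w + u)) (hνsΩ (w + u))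
        have h2 := hshift (νs w) w u
        have h3 := hshift (νs (w + u)) w u
        have h4 := (abs_le.mp hφb).2
        linarith
      have hql := hQlower w hw u ((1/2:ℝ) • (νs w - νs (w + u)))
      have hεu : ε/2 ≤ ε - lcqpE2 u := by linarith
      have hdsum : ∑ i, ((1/2:ℝ) • (νs w - νs (w + u))) i ^ 2
          = lcqpE2 (νs w - νs (w + u)) ^ 2 / 4 := by
        rw [lcqpE2_sq]
        rw [Finset.sum_div]
        refine Finset.sum_congr rfl fun i _ => ?_
        simp only [Pi.smul_apply, Pi.sub_apply, smul_eq_mul]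
        ring
      have hd2 : (ε/2) * (lcqpE2 (νs w - νs (w + u)) ^ 2 / 4)
          ≤ ((1/2:ℝ) • (νs w - νs (w + u))) ⬝ᵥ
              ((D (w + u) + ε • (1 : Matrix (Fin N) (Fin N) ℝ)).mulVec
                ((1/2:ℝ) • (νs w - νs (w + u)))) := by
        calc (ε/2) * (lcqpE2 (νs w - νs (w + u)) ^ 2 / 4)
            ≤ (ε - lcqpE2 u) * (lcqpE2 (νs w - νs (w + u)) ^ 2 / 4) := by
              apply mul_le_mul_of_nonneg_right hεu (by positivity)
          _ = (ε - lcqpE2 u) * ∑ i, ((1/2:ℝ) • (νs w - νs (w + u))) i ^ 2 := by rw [hdsum]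
          _ ≤ _ := hql
      have hQle : ((1/2:ℝ) • (νs w - νs (w + u))) ⬝ᵥ
          ((D (w + u) + ε • (1 : Matrix (Fin N) (Fin N) ℝ)).mulVec
            ((1/2:ℝ) • (νs w - νs (w + u))))
          ≤ lcqpE2 u * lcqpE2 (νs w - νs (w + u)) * C / 2 := by
        linarith [hge, hmide, hdiff]
      have hcomb : (ε/2) * (lcqpE2 (νs w - νs (w + u)) ^ 2 / 4)
          ≤ lcqpE2 u * lcqpE2 (νs w - νs (w + u)) * C / 2 := le_trans hd2 hQle
      rcases eq_or_lt_of_le hs0 with hseq | hslt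
      · rw [← hseq]; positivity
      · have h5 : (ε * lcqpE2 (νs w - νs (w + u))) * lcqpE2 (νs w - νs (w + u))
            ≤ (4 * C * lcqpE2 u) * lcqpE2 (νs w - νs (w + u)) := by nlinarith [hcomb]
        have h6 : ε * lcqpE2 (νs w - νs (w + u)) ≤ 4 * C * lcqpE2 u :=
          le_of_mul_le_mul_right h5 hslt
        rw [div_mul_eq_mul_div, le_div_iff₀ hε]
        linarith
    -- error bounds
    have hup : V (w + u) - V w - φ (νs w) u ≤ 0 := by
      have h1 : V (w + u) ≤ f (νs w) (w + u) := by
        rw [hVeq (w + u)]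
        exact hνsmin (w + u) (νs w) (hνsΩ w)
      have h2 := hshift (νs w) w u
      rw [hVeq w]
      linarith
    have hlow : φ (νs (w + u)) u - φ (νs w) u ≤ V (w + u) - V w - φ (νs w) u := by
      have h1 : f (νs w) w ≤ f (νs (w + u)) w := hνsmin w (νs (w + u)) (hνsΩ (w + u))
      have h2 := hshift (νs (w + u)) w u
      rw [hVeq (w + u), hVeq w]
      linarith
    have habs := abs_le.mp hφb
    rw [abs_le]
    have hb : lcqpE2 u * lcqpE2 (νs w - νs (w + u)) * C ≤ (4 * C ^ 2 / ε) * lcqpE2 u ^ 2 := by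
      have h5 : lcqpE2 u * lcqpE2 (νs w - νs (w + u))
          ≤ lcqpE2 u * ((4 * C / ε) * lcqpE2 u) :=
        mul_le_mul_of_nonneg_left hstab hu0
      calc lcqpE2 u * lcqpE2 (νs w - νs (w + u)) * C
          ≤ lcqpE2 u * ((4 * C / ε) * lcqpE2 u) * C :=
            mul_le_mul_of_nonneg_right h5 (le_of_lt hC0)
        _ = (4 * C ^ 2 / ε) * lcqpE2 u ^ 2 := by ring
    constructor
    · linarith [habs.2, hlow, hb]
    · have hnn : 0 ≤ (4 * C ^ 2 / ε) * lcqpE2 u ^ 2 := by positivity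
      linarith [hup, hnn]
  -- conclude differentiability
  rw [hasFDerivAt_iff_isLittleO_nhds_zero]
  rw [Asymptotics.isLittleO_iff]
  intro ccst hccst
  obtain ⟨K, hK, hK0⟩ : ∃ K : ℝ, K = (4 * C ^ 2 / ε) * (Real.sqrt r) ^ 2 ∧ 0 ≤ K :=
    ⟨_, rfl, by positivity⟩
  have hsr : (0:ℝ) ≤ Real.sqrt r := Real.sqrt_nonneg _
  have he2norm : ∀ u : Fin r → ℝ, lcqpE2 u ≤ Real.sqrt r * ‖u‖ := by
    intro u
    have h1 : ∑ k, u k ^ 2 ≤ (r : ℝ) * ‖u‖ ^ 2 := by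
      calc ∑ k, u k ^ 2 ≤ ∑ _k : Fin r, ‖u‖ ^ 2 := by
            refine Finset.sum_le_sum fun k _ => ?_
            have h2 : |u k| ≤ ‖u‖ := by
              simpa [Real.norm_eq_abs] using norm_le_pi_norm u k
            nlinarith [abs_nonneg (u k), le_abs_self (u k), neg_abs_le (u k)]
        _ = (r : ℝ) * ‖u‖ ^ 2 := by simp [Finset.sum_const, Finset.card_univ]
    unfold lcqpE2
    calc Real.sqrt (∑ k, u k ^ 2) ≤ Real.sqrt ((r : ℝ) * ‖u‖ ^ 2) :=
          Real.sqrt_le_sqrt h1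
      _ = Real.sqrt r * ‖u‖ := by
          rw [Real.sqrt_mul (Nat.cast_nonneg r), Real.sqrt_sq (norm_nonneg u)]
  obtain ⟨δ, hδdef, hδ0⟩ : ∃ δ : ℝ, δ = min (ε / (2 * (Real.sqrt r + 1))) (ccst / (K + 1))
      ∧ 0 < δ := by
    refine ⟨_, rfl, lt_min (by positivity) (div_pos hccst (by linarith))⟩
  rw [Metric.eventually_nhds_iff]
  refine ⟨δ, hδ0, fun u hu => ?_⟩
  rw [dist_zero_right] at hu
  rw [hδdef] at hu
  have hu2 : lcqpE2 u ≤ ε / 2 := by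
    have h1 : ‖u‖ ≤ ε / (2 * (Real.sqrt r + 1)) :=
      le_of_lt (lt_of_lt_of_le hu (min_le_left _ _))
    have h2 := he2norm u
    have h3 : Real.sqrt r * ‖u‖ ≤ Real.sqrt r * (ε / (2 * (Real.sqrt r + 1))) :=
      mul_le_mul_of_nonneg_left h1 hsr
    have h4 : Real.sqrt r * (ε / (2 * (Real.sqrt r + 1))) ≤ ε / 2 := by
      rw [mul_div_assoc', div_le_div_iff₀ (by positivity) (by norm_num : (0:ℝ) < 2)]
      nlinarith [hsr, hε]
    linarith
  have hkeyu := hkey u hu2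
  have hEbound : |V (w + u) - V w - φ (νs w) u| ≤ K * ‖u‖ ^ 2 := by
    have h1 : lcqpE2 u ^ 2 ≤ (Real.sqrt r) ^ 2 * ‖u‖ ^ 2 := by
      have h2 := he2norm u
      nlinarith [lcqpE2_nonneg u, norm_nonneg u, hsr]
    calc |V (w + u) - V w - φ (νs w) u| ≤ (4 * C ^ 2 / ε) * lcqpE2 u ^ 2 := hkeyu
      _ ≤ (4 * C ^ 2 / ε) * ((Real.sqrt r) ^ 2 * ‖u‖ ^ 2) := by
          apply mul_le_mul_of_nonneg_left h1 (by positivity)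
      _ = K * ‖u‖ ^ 2 := by rw [hK]; ring
  have hfinal : K * ‖u‖ ^ 2 ≤ ccst * ‖u‖ := by
    have h1 : ‖u‖ ≤ ccst / (K + 1) := le_of_lt (lt_of_lt_of_le hu (min_le_right _ _))
    have h2 : K * ‖u‖ ≤ K * (ccst / (K + 1)) :=
      mul_le_mul_of_nonneg_left h1 hK0
    have h3 : K * (ccst / (K + 1)) ≤ ccst := by
      rw [mul_div_assoc', div_le_iff₀ (by linarith : (0:ℝ) < K + 1)]
      nlinarith [le_of_lt hccst, hK0]
    calc K * ‖u‖ ^ 2 = (K * ‖u‖) * ‖u‖ := by ring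
      _ ≤ ccst * ‖u‖ := mul_le_mul_of_nonneg_right (le_trans h2 h3) (norm_nonneg u)
  calc ‖V (w + u) - V w - (LinearMap.toContinuousLinearMap Lmap) u‖
      = |V (w + u) - V w - φ (νs w) u| := by rw [Real.norm_eq_abs, hLu]
    _ ≤ K * ‖u‖ ^ 2 := hEbound
    _ ≤ ccst * ‖u‖ := hfinal
end

section
/- Suppose the feasible set Ω is nonempty and contained in the closed Euclidean ball of radius C > 0 centered at the origin. Then the gradient of the optimal value function is Lipschitz continuous on the nonnegative orthant: there exists L ≥ 0 such that for all w₁, w₂ ∈ ℝ^r with w₁ ≥ 0 and w₂ ≥ 0, ‖∇V(w₂) − ∇V(w₁)‖₂ ≤ L·‖w₂ − w₁‖₂. -/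
open Matrix

lemma l2norm_nonneg {k : ℕ} (v : Fin k → ℝ) : 0 ≤ l2norm v := Real.sqrt_nonneg _

lemma l2norm_mul_self {k : ℕ} (v : Fin k → ℝ) : l2norm v * l2norm v = ∑ i, v i ^ 2 :=
  Real.mul_self_sqrt (by positivity)

lemma abs_dot_le {k : ℕ} (v u : Fin k → ℝ) : |v ⬝ᵥ u| ≤ l2norm v * l2norm u := by
  have h := Finset.sum_mul_sq_le_sq_mul_sq Finset.univ v u
  rw [← Real.sqrt_sq_eq_abs, l2norm, l2norm, ← Real.sqrt_mul (by positivity)]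
  exact Real.sqrt_le_sqrt (by simpa [dotProduct] using h)

lemma l2norm_single {k : ℕ} (i : Fin k) : l2norm (Pi.single i (1:ℝ)) = 1 := by
  have : ∑ j, (Pi.single i 1 : Fin k → ℝ) j ^ 2 = 1 := by
    simp [Pi.single_apply, ite_pow, Finset.sum_ite_eq']
  rw [l2norm, this, Real.sqrt_one]

lemma l2norm_neg {k : ℕ} (v : Fin k → ℝ) : l2norm (-v) = l2norm v := by
  simp [l2norm]

lemma l2norm_le_sqrt_card_mul {k : ℕ} (v : Fin k → ℝ) (a : ℝ) (ha : 0 ≤ a)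
    (h : ∀ i, |v i| ≤ a) : l2norm v ≤ Real.sqrt k * a := by
  have hsum : ∑ i, v i ^ 2 ≤ (k : ℝ) * a ^ 2 := by
    calc ∑ i, v i ^ 2 ≤ ∑ _i : Fin k, a ^ 2 :=
          Finset.sum_le_sum fun i _ => by
            have := h i; nlinarith [abs_nonneg (v i), sq_abs (v i)]
      _ = (k : ℝ) * a ^ 2 := by simp [Finset.sum_const, mul_comm]
  calc l2norm v ≤ Real.sqrt ((k : ℝ) * a ^ 2) := Real.sqrt_le_sqrt hsum
    _ = Real.sqrt k * a := by
        rw [Real.sqrt_mul (by positivity), Real.sqrt_sq ha]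

lemma dot_mulVec_symm {k : ℕ} {M : Matrix (Fin k) (Fin k) ℝ} (hM : M.IsSymm)
    (u v : Fin k → ℝ) : u ⬝ᵥ M *ᵥ v = v ⬝ᵥ M *ᵥ u := by
  have h2 : u ᵥ* M = M *ᵥ u := by rw [← vecMul_transpose, hM]
  rw [dotProduct_mulVec u M v, h2, dotProduct_comm]

/-- The gradient of the optimal value function of the regularized
LCQP is Lipschitz continuous on the nonnegative orthant of symbolic weights. -/
theorem lcqp_value_gradient_lipschitz
    (N M r : ℕ) (hN : 0 < N) (hM : 0 < M) (hr : 0 < r)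
    (ε : ℝ) (hε : 0 < ε)
    (A : Matrix (Fin M) (Fin N) ℝ) (b : Fin M → ℝ)
    (Ω : Set (Fin N → ℝ))
    (hΩ : Ω = {ν | ∀ i, A.mulVec ν i + b i ≤ 0})
    (D : (Fin r → ℝ) →ₗ[ℝ] Matrix (Fin N) (Fin N) ℝ)
    (hDdiag : ∀ w, (D w).IsDiag)
    (hDpsd : ∀ w : Fin r → ℝ, 0 ≤ w → (D w).PosSemidef)
    (hDbound : ∀ (w : Fin r → ℝ) (ν : Fin N → ℝ),
      l2norm ((D w).mulVec ν) ≤ l2norm w * l2norm ν)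
    (c : (Fin r → ℝ) →ₗ[ℝ] (Fin N → ℝ))
    (hcbound : ∀ w : Fin r → ℝ, l2norm (c w) ≤ l2norm w)
    (f : (Fin N → ℝ) → (Fin r → ℝ) → ℝ)
    (hf : ∀ ν w, f ν w =
      ν ⬝ᵥ ((D w + ε • (1 : Matrix (Fin N) (Fin N) ℝ)).mulVec ν) + c w ⬝ᵥ ν)
    (C : ℝ) (hC : 0 < C)
    (hΩne : Ω.Nonempty)
    (hΩball : ∀ ν ∈ Ω, l2norm ν ≤ C)
    (V : (Fin r → ℝ) → ℝ)
    (hV : ∀ w, V w = sInf ((fun ν => f ν w) '' Ω))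
    (νstar : (Fin r → ℝ) → (Fin N → ℝ))
    (hmin : ∀ w : Fin r → ℝ, 0 ≤ w →
      νstar w ∈ Ω ∧ (∀ ν ∈ Ω, f (νstar w) w ≤ f ν w) ∧
      (∀ ν ∈ Ω, (∀ ν' ∈ Ω, f ν w ≤ f ν' w) → ν = νstar w))
    (gradV : (Fin r → ℝ) → (Fin r → ℝ))
    (hgradformula : ∀ w : Fin r → ℝ, 0 ≤ w → ∀ k : Fin r,
      gradV w k = νstar w ⬝ᵥ (D (Pi.single k 1)).mulVec (νstar w) +
        c (Pi.single k 1) ⬝ᵥ νstar w)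
    (hgrad : ∀ w : Fin r → ℝ, 0 ≤ w →
      ∃ L : (Fin r → ℝ) →L[ℝ] ℝ, HasFDerivAt V L w ∧
        ∀ k : Fin r, L (Pi.single k 1) = gradV w k) :
    ∃ L : ℝ, 0 ≤ L ∧
      ∀ w₁ w₂ : Fin r → ℝ, 0 ≤ w₁ → 0 ≤ w₂ →
        l2norm (gradV w₂ - gradV w₁) ≤ L * l2norm (w₂ - w₁) := by
  -- notation
  set Mw : (Fin r → ℝ) → Matrix (Fin N) (Fin N) ℝ :=
    fun w => D w + ε • (1 : Matrix (Fin N) (Fin N) ℝ) with hMw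
  have hMsym : ∀ w, (Mw w).IsSymm := by
    intro w
    have h1 := (hDdiag w).isSymm
    unfold Matrix.IsSymm at h1 ⊢
    rw [transpose_add, h1, transpose_smul, transpose_one]
  -- quadratic expansion
  have hexp : ∀ (w : Fin r → ℝ) (ν δ : Fin N → ℝ) (t : ℝ),
      f (ν + t • δ) w = f ν w + t * (2 * (ν ⬝ᵥ Mw w *ᵥ δ) + c w ⬝ᵥ δ)
        + t ^ 2 * (δ ⬝ᵥ Mw w *ᵥ δ) := by
    intro w ν δ t
    have hswap := dot_mulVec_symm (hMsym w) δ ν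
    rw [hf, hf]
    simp only [hMw, mulVec_add, mulVec_smul, dotProduct_add, add_dotProduct,
      smul_dotProduct, dotProduct_smul, smul_eq_mul] at hswap ⊢
    rw [hswap]; ring
  -- convexity of Ω
  have hconv : ∀ ν ∈ Ω, ∀ μ ∈ Ω, ∀ t : ℝ, 0 ≤ t → t ≤ 1 → ν + t • (μ - ν) ∈ Ω := by
    intro ν hν μ hμ t ht ht1
    rw [hΩ] at hν hμ ⊢
    simp only [Set.mem_setOf_eq] at hν hμ ⊢
    intro i
    have h1 := hν i
    have h2 := hμ i
    have he : (A *ᵥ (ν + t • (μ - ν))) i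
        = (A *ᵥ ν) i + t * ((A *ᵥ μ) i - (A *ᵥ ν) i) := by
      simp [mulVec_add, mulVec_smul, mulVec_sub]
    rw [he]; nlinarith
  -- positive semidefiniteness of Mw w
  have hq0 : ∀ w : Fin r → ℝ, 0 ≤ w → ∀ δ : Fin N → ℝ,
      ε * (l2norm δ * l2norm δ) ≤ δ ⬝ᵥ Mw w *ᵥ δ := by
    intro w hw δ
    have hpsd := (hDpsd w hw).dotProduct_mulVec_nonneg δ
    simp only [star_trivial] at hpsd
    have he : δ ⬝ᵥ Mw w *ᵥ δ = δ ⬝ᵥ D w *ᵥ δ + ε * (δ ⬝ᵥ δ) := by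
      simp only [hMw, add_mulVec, dotProduct_add, smul_mulVec, one_mulVec,
        dotProduct_smul, smul_eq_mul]
    have hdd : δ ⬝ᵥ δ = l2norm δ * l2norm δ := by
      rw [l2norm_mul_self]; simp [dotProduct, sq]
    rw [he, hdd]; linarith
  -- variational inequality at the minimizer
  have hVI : ∀ w : Fin r → ℝ, 0 ≤ w → ∀ ν ∈ Ω,
      0 ≤ 2 * (νstar w ⬝ᵥ Mw w *ᵥ (ν - νstar w)) + c w ⬝ᵥ (ν - νstar w) := by
    intro w hw ν hν
    obtain ⟨hmem, hopt, -⟩ := hmin w hw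
    set δ : Fin N → ℝ := ν - νstar w with hδdef
    set g : ℝ := 2 * (νstar w ⬝ᵥ Mw w *ᵥ δ) + c w ⬝ᵥ δ with hg
    set q : ℝ := δ ⬝ᵥ Mw w *ᵥ δ with hqdef
    have hq : 0 ≤ q := le_trans (mul_nonneg hε.le (mul_nonneg (l2norm_nonneg _) (l2norm_nonneg _))) (hq0 w hw δ)
    have key : ∀ t : ℝ, 0 < t → t ≤ 1 → 0 ≤ g + t * q := by
      intro t ht ht1
      have hmem2 : νstar w + t • δ ∈ Ω := hconv _ hmem ν hν t ht.le ht1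
      have h3 := hopt _ hmem2
      rw [hexp w (νstar w) δ t] at h3
      nlinarith
    by_contra hgneg
    push_neg at hgneg
    set t : ℝ := min 1 ((-g) / (2 * (q + 1))) with htdef
    have htpos : 0 < t := lt_min one_pos (div_pos (by linarith) (by linarith))
    have ht1 : t ≤ 1 := min_le_left _ _
    have ht2 : t * (2 * (q + 1)) ≤ -g := by
      have := min_le_right 1 ((-g) / (2 * (q + 1)))
      exact (le_div_iff₀ (by linarith)).mp this
    have := key t htpos ht1
    nlinarith
  -- the Lipschitz constant
  refine ⟨Real.sqrt r * (2 * C + 1) * ((2 * C + 1) / (2 * ε)), by positivity, ?_⟩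
  intro w₁ w₂ hw₁ hw₂
  set ν₁ : Fin N → ℝ := νstar w₁ with hν₁
  set ν₂ : Fin N → ℝ := νstar w₂ with hν₂
  set δ : Fin N → ℝ := ν₂ - ν₁ with hδ
  set Δ : Fin r → ℝ := w₂ - w₁ with hΔ
  have hν₁Ω : ν₁ ∈ Ω := (hmin w₁ hw₁).1
  have hν₂Ω : ν₂ ∈ Ω := (hmin w₂ hw₂).1
  have h1 := hVI w₁ hw₁ ν₂ hν₂Ω
  have h2 := hVI w₂ hw₂ ν₁ hν₁Ω
  have hsub : ν₁ - ν₂ = -δ := by rw [hδ]; abel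
  rw [hsub] at h2
  simp only [mulVec_neg, dotProduct_neg, mul_neg] at h2
  -- rewrite h2's matrix Mw w₂ in terms of Mw w₁
  have e1 : ν₂ ⬝ᵥ Mw w₂ *ᵥ δ = ν₂ ⬝ᵥ Mw w₁ *ᵥ δ + ν₂ ⬝ᵥ (D Δ) *ᵥ δ := by
    have : Mw w₂ = Mw w₁ + D Δ := by
      simp only [hMw, hΔ, map_sub]; abel
    rw [this, add_mulVec, dotProduct_add]
  have e2 : ν₁ ⬝ᵥ Mw w₁ *ᵥ δ = ν₂ ⬝ᵥ Mw w₁ *ᵥ δ - δ ⬝ᵥ Mw w₁ *ᵥ δ := by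
    have : ν₁ = ν₂ - δ := by rw [hδ]; abel
    rw [this, sub_dotProduct]
  have e3 : c w₂ ⬝ᵥ δ - c w₁ ⬝ᵥ δ = c Δ ⬝ᵥ δ := by
    rw [hΔ, map_sub, sub_dotProduct]
  -- strong convexity estimate
  have hnd : 0 ≤ l2norm δ := l2norm_nonneg δ
  have hnΔ : 0 ≤ l2norm Δ := l2norm_nonneg Δ
  have b1 : |ν₂ ⬝ᵥ (D Δ) *ᵥ δ| ≤ C * (l2norm Δ * l2norm δ) := by
    calc |ν₂ ⬝ᵥ (D Δ) *ᵥ δ| ≤ l2norm ν₂ * l2norm ((D Δ) *ᵥ δ) := abs_dot_le _ _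
      _ ≤ C * (l2norm Δ * l2norm δ) :=
        mul_le_mul (hΩball ν₂ hν₂Ω) (hDbound Δ δ) (l2norm_nonneg _)
          hC.le
  have b2 : |c Δ ⬝ᵥ δ| ≤ l2norm Δ * l2norm δ := by
    calc |c Δ ⬝ᵥ δ| ≤ l2norm (c Δ) * l2norm δ := abs_dot_le _ _
      _ ≤ l2norm Δ * l2norm δ :=
        mul_le_mul_of_nonneg_right (hcbound Δ) (l2norm_nonneg _)
  have hsc : 2 * ε * (l2norm δ * l2norm δ) ≤ (2 * C + 1) * (l2norm Δ * l2norm δ) := by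
    have hlow := hq0 w₁ hw₁ δ
    have habs1 := neg_abs_le (ν₂ ⬝ᵥ (D Δ) *ᵥ δ)
    have habs2 := neg_abs_le (c Δ ⬝ᵥ δ)
    nlinarith [h1, h2, e1, e2, e3]
  have hδle : l2norm δ ≤ (2 * C + 1) / (2 * ε) * l2norm Δ := by
    rcases eq_or_lt_of_le hnd with h | h
    · rw [← h]; positivity
    · rw [div_mul_eq_mul_div, le_div_iff₀ (by linarith : (0:ℝ) < 2 * ε)]
      nlinarith
  -- componentwise bound on the gradient difference
  have hcomp : ∀ k : Fin r, |(gradV w₂ - gradV w₁) k| ≤ (2 * C + 1) * l2norm δ := by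
    intro k
    set Dk : Matrix (Fin N) (Fin N) ℝ := D (Pi.single k 1) with hDk
    have hsymk : Dk.IsSymm := (hDdiag _).isSymm
    have hek : l2norm (Pi.single k 1 : Fin r → ℝ) = 1 := l2norm_single k
    have hdiff : (gradV w₂ - gradV w₁) k
        = ν₂ ⬝ᵥ Dk *ᵥ δ + ν₁ ⬝ᵥ Dk *ᵥ δ + c (Pi.single k 1) ⬝ᵥ δ := by
      rw [Pi.sub_apply, hgradformula w₂ hw₂ k, hgradformula w₁ hw₁ k]
      have hswap : ν₁ ⬝ᵥ Dk *ᵥ ν₂ = ν₂ ⬝ᵥ Dk *ᵥ ν₁ := dot_mulVec_symm hsymk ν₁ ν₂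
      simp only [hδ, mulVec_sub, dotProduct_sub, sub_dotProduct]
      rw [hswap]; ring
    have bb1 : |ν₂ ⬝ᵥ Dk *ᵥ δ| ≤ C * l2norm δ := by
      calc |ν₂ ⬝ᵥ Dk *ᵥ δ| ≤ l2norm ν₂ * l2norm (Dk *ᵥ δ) := abs_dot_le _ _
        _ ≤ C * (1 * l2norm δ) := by
            refine mul_le_mul (hΩball ν₂ hν₂Ω) ?_ (l2norm_nonneg _) hC.le
            have := hDbound (Pi.single k 1) δ
            rwa [hek] at this
        _ = C * l2norm δ := by ring
    have bb2 : |ν₁ ⬝ᵥ Dk *ᵥ δ| ≤ C * l2norm δ := by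
      calc |ν₁ ⬝ᵥ Dk *ᵥ δ| ≤ l2norm ν₁ * l2norm (Dk *ᵥ δ) := abs_dot_le _ _
        _ ≤ C * (1 * l2norm δ) := by
            refine mul_le_mul (hΩball ν₁ hν₁Ω) ?_ (l2norm_nonneg _) hC.le
            have := hDbound (Pi.single k 1) δ
            rwa [hek] at this
        _ = C * l2norm δ := by ring
    have bb3 : |c (Pi.single k 1) ⬝ᵥ δ| ≤ l2norm δ := by
      calc |c (Pi.single k 1) ⬝ᵥ δ| ≤ l2norm (c (Pi.single k 1)) * l2norm δ := abs_dot_le _ _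
        _ ≤ 1 * l2norm δ := by
            refine mul_le_mul_of_nonneg_right ?_ (l2norm_nonneg _)
            have := hcbound (Pi.single k 1); rwa [hek] at this
        _ = l2norm δ := one_mul _
    rw [hdiff]
    calc |ν₂ ⬝ᵥ Dk *ᵥ δ + ν₁ ⬝ᵥ Dk *ᵥ δ + c (Pi.single k 1) ⬝ᵥ δ|
        ≤ |ν₂ ⬝ᵥ Dk *ᵥ δ| + |ν₁ ⬝ᵥ Dk *ᵥ δ| + |c (Pi.single k 1) ⬝ᵥ δ| :=
          (abs_add_le _ _).trans (add_le_add_left (abs_add_le _ _) _)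
      _ ≤ (2 * C + 1) * l2norm δ := by linarith
  -- assemble
  have hfin : l2norm (gradV w₂ - gradV w₁) ≤ Real.sqrt r * ((2 * C + 1) * l2norm δ) :=
    l2norm_le_sqrt_card_mul _ _ (by positivity) hcomp
  calc l2norm (gradV w₂ - gradV w₁) ≤ Real.sqrt r * ((2 * C + 1) * l2norm δ) := hfin
    _ ≤ Real.sqrt r * ((2 * C + 1) * ((2 * C + 1) / (2 * ε) * l2norm Δ)) := by
        have h0 : (0:ℝ) ≤ Real.sqrt r * (2 * C + 1) := by positivity
        have := mul_le_mul_of_nonneg_left hδle h0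
        calc Real.sqrt r * ((2 * C + 1) * l2norm δ)
            = Real.sqrt r * (2 * C + 1) * l2norm δ := by ring
          _ ≤ Real.sqrt r * (2 * C + 1) * ((2 * C + 1) / (2 * ε) * l2norm Δ) := by
              exact mul_le_mul_of_nonneg_left hδle h0
          _ = Real.sqrt r * ((2 * C + 1) * ((2 * C + 1) / (2 * ε) * l2norm Δ)) := by ring
    _ = Real.sqrt r * (2 * C + 1) * ((2 * C + 1) / (2 * ε)) * l2norm Δ := by ring
end

section
/- Fix b ∈ ℝ^M and i ∈ {1,…,M}. Suppose Ω(b) is nonempty and there exists a feasible point ν̄ ∈ Ω(b) strictly satisfying the i-th constraint, i.e., (Aν̄ + b)_i < 0. Then the function φ(t) := V(b + t·e_i) (where e_i is the i-th standard basis vector of ℝ^M) is finite on a neighborhood of t = 0 and convex there, and its convex subdifferential at t = 0 equals the set of i-th components of optimal dual solutions: ∂φ(0) = { μ*_i : μ* ∈ argmin_{μ ∈ ℝ^M, μ ≥ 0} h(μ; b) }, and this set is nonempty and bounded. -/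
open Finset Matrix


lemma cara_aux {V : Type*} [AddCommGroup V] [Module ℝ V] {ι : Type*} [Fintype ι] [DecidableEq ι]
    (a : ι → V) (m : ℕ) :
    ∀ μ : ι → ℝ, (∀ j, 0 ≤ μ j) → (univ.filter (fun j => μ j ≠ 0)).card ≤ m →
    ∃ s : Finset ι, LinearIndependent ℝ (fun j : s => a j) ∧
      ∃ κ : ι → ℝ, (∀ j, 0 ≤ κ j) ∧ (∀ j ∉ s, κ j = 0) ∧ ∑ j, κ j • a j = ∑ j, μ j • a j := by
  induction m with
  | zero =>
    intro μ hμ hcard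
    have hs : (univ.filter (fun j => μ j ≠ 0)) = ∅ := Finset.card_eq_zero.mp (Nat.le_zero.mp hcard)
    have hμ0 : ∀ j, μ j = 0 := by
      intro j
      by_contra hj
      have : j ∈ univ.filter (fun j => μ j ≠ 0) := by simp [hj]
      simp [hs] at this
    refine ⟨∅, ?_, μ, hμ, fun j _ => hμ0 j, rfl⟩
    have : IsEmpty ((∅ : Finset ι) : Type _) := ⟨fun x => Finset.notMem_empty _ x.2⟩
    exact linearIndependent_empty_type
  | succ m ih =>
    intro μ hμ hcard
    set s : Finset ι := univ.filter (fun j => μ j ≠ 0) with hs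
    by_cases hindep : LinearIndependent ℝ (fun j : s => a j)
    · refine ⟨s, hindep, μ, hμ, fun j hj => ?_, rfl⟩
      by_contra hne
      exact hj (by simp [hs, hne])
    · -- extract a vanishing combination
      have hG : ∃ G : ι → ℝ, (∀ j ∉ s, G j = 0) ∧ (∑ j, G j • a j = 0) ∧ ∃ j, G j ≠ 0 := by
        rw [Fintype.not_linearIndependent_iff] at hindep
        obtain ⟨g, hgsum, j1, hj1⟩ := hindep
        refine ⟨fun j => if h : j ∈ s then g ⟨j, h⟩ else 0, fun j hj => dif_neg hj, ?_, j1,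
          by simp [hj1]⟩
        rw [← Finset.sum_subset (Finset.subset_univ s)]
        · rw [← Finset.sum_coe_sort s, ← hgsum]
          exact Finset.sum_congr rfl (fun x _ => by simp)
        · intro j _ hj
          simp [dif_neg hj]
      -- normalize so that some coefficient is positive
      have hG' : ∃ G : ι → ℝ, (∀ j ∉ s, G j = 0) ∧ (∑ j, G j • a j = 0) ∧ ∃ j, 0 < G j := by
        obtain ⟨G, h1, h2, j1, h3⟩ := hG
        rcases lt_or_gt_of_ne h3 with hneg | hpos
        · exact ⟨-G, fun j hj => by simp [h1 j hj], by simpa using h2, j1, by simpa using hneg⟩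
        · exact ⟨G, h1, h2, j1, hpos⟩
      obtain ⟨G, hGs, hGsum, j1, hj1⟩ := hG'
      set T : Finset ι := univ.filter (fun j => 0 < G j) with hT
      have hTne : T.Nonempty := ⟨j1, by simp [hT, hj1]⟩
      obtain ⟨j0, hj0T, hj0min⟩ := T.exists_min_image (fun j => μ j / G j) hTne
      have hGj0 : 0 < G j0 := by simpa [hT] using hj0T
      set r : ℝ := μ j0 / G j0 with hr
      have hr0 : 0 ≤ r := div_nonneg (hμ j0) hGj0.le
      set μ' : ι → ℝ := fun j => μ j - r * G j with hμ'
      have hμ'0 : ∀ j, 0 ≤ μ' j := by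
        intro j
        by_cases hj : 0 < G j
        · have := hj0min j (by simp [hT, hj])
          have h2 : r * G j ≤ (μ j / G j) * G j := mul_le_mul_of_nonneg_right this hj.le
          rw [div_mul_cancel₀ _ (ne_of_gt hj)] at h2
          simp [hμ', h2]
        · push_neg at hj
          have : r * G j ≤ 0 := mul_nonpos_of_nonneg_of_nonpos hr0 hj
          have := hμ j
          simp only [hμ']; nlinarith
      have hsub : univ.filter (fun j => μ' j ≠ 0) ⊆ s.erase j0 := by
        intro j hj
        simp only [mem_filter, mem_univ, true_and] at hj
        rw [Finset.mem_erase]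
        constructor
        · rintro rfl
          apply hj
          simp [hμ', hr]
          field_simp
          ring
        · by_contra hjs
          apply hj
          have h1 : μ j = 0 := by
            by_contra hne
            exact hjs (by simp [hs, hne])
          simp [hμ', h1, hGs j hjs]
      have hj0s : j0 ∈ s := by
        by_contra hj0s
        exact absurd (hGs j0 hj0s) (ne_of_gt hGj0)
      have hcard' : (univ.filter (fun j => μ' j ≠ 0)).card ≤ m := by
        calc (univ.filter (fun j => μ' j ≠ 0)).card ≤ (s.erase j0).card :=
              Finset.card_le_card hsub
        _ = s.card - 1 := Finset.card_erase_of_mem hj0s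
        _ ≤ (m + 1) - 1 := by omega
        _ = m := rfl
      obtain ⟨s', hind, κ, hκ0, hκs, hκsum⟩ := ih μ' hμ'0 hcard'
      refine ⟨s', hind, κ, hκ0, hκs, ?_⟩
      rw [hκsum]
      have : ∑ j, μ' j • a j = ∑ j, μ j • a j - r • ∑ j, G j • a j := by
        rw [Finset.smul_sum, ← Finset.sum_sub_distrib]
        exact Finset.sum_congr rfl (fun j _ => by simp [hμ', sub_smul, smul_smul])
      rw [this, hGsum, smul_zero, sub_zero]

/-- finitely generated cones are closed (in a f.d. inner product space). -/
lemma fg_cone_closed {n : ℕ} {ι : Type*} [Fintype ι] [DecidableEq ι]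
    (a : ι → EuclideanSpace ℝ (Fin n)) :
    IsClosed {x : EuclideanSpace ℝ (Fin n) |
      ∃ μ : ι → ℝ, (∀ j, 0 ≤ μ j) ∧ x = ∑ j, μ j • a j} := by
  classical
  have key : {x : EuclideanSpace ℝ (Fin n) | ∃ μ : ι → ℝ, (∀ j, 0 ≤ μ j) ∧ x = ∑ j, μ j • a j}
      = ⋃ s ∈ {s : Finset ι | LinearIndependent ℝ (fun j : s => a j)},
          (fun μ : s → ℝ => ∑ j : s, μ j • a (j : ι)) '' {μ | ∀ j, 0 ≤ μ j} := by
    ext x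
    simp only [Set.mem_setOf_eq, Set.mem_iUnion, Set.mem_image]
    constructor
    · rintro ⟨μ, hμ0, rfl⟩
      obtain ⟨s, hind, κ, hκ0, hκs, hκsum⟩ := cara_aux a _ μ hμ0 le_rfl
      refine ⟨s, hind, fun j => κ j, fun j => hκ0 j, ?_⟩
      rw [← hκsum, Finset.sum_coe_sort s (fun j => κ j • a j)]
      exact Finset.sum_subset (Finset.subset_univ s) (fun j _ hj => by simp [hκs j hj])
    · rintro ⟨s, hind, μ, hμ0, rfl⟩
      refine ⟨fun j => if h : j ∈ s then μ ⟨j, h⟩ else 0,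
        fun j => by dsimp only; split <;> [exact hμ0 _; exact le_rfl], ?_⟩
      rw [← Finset.sum_subset (Finset.subset_univ s) (fun j _ hj => by simp [dif_neg hj]),
        ← Finset.sum_coe_sort s]
      exact Finset.sum_congr rfl (fun j _ => by simp)
  rw [key]
  apply Set.Finite.isClosed_biUnion (Set.toFinite _)
  intro s hs
  have hclosed : IsClosed {μ : {x // x ∈ s} → ℝ | ∀ j, 0 ≤ μ j} := by
    have : {μ : {x // x ∈ s} → ℝ | ∀ j, 0 ≤ μ j} = ⋂ j, {μ | 0 ≤ μ j} := by
      ext; simp [Set.mem_iInter]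
    rw [this]
    exact isClosed_iInter fun j => isClosed_le continuous_const (continuous_apply j)
  let L : ({x // x ∈ s} → ℝ) →ₗ[ℝ] EuclideanSpace ℝ (Fin n) :=
    { toFun := fun μ => ∑ j : s, μ j • a (j : ι)
      map_add' := by intro x y; simp [add_smul, Finset.sum_add_distrib]
      map_smul' := by intro c x; simp [smul_smul, Finset.smul_sum] }
  have hLinj : Function.Injective L := by
    rw [← LinearMap.ker_eq_bot, LinearMap.ker_eq_bot']
    intro μ hμ
    have := Fintype.linearIndependent_iff.mp hs μ (by simpa [L] using hμ)
    funext j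
    exact this j
  have := ((LinearMap.isClosedEmbedding_of_injective
    (LinearMap.ker_eq_bot.mpr hLinj)).isClosedMap _ hclosed)
  simpa [L] using this

lemma euclid_inner_eq_dot {n : ℕ} (x y : EuclideanSpace ℝ (Fin n)) :
    (inner ℝ x y : ℝ) = (x : Fin n → ℝ) ⬝ᵥ (y : Fin n → ℝ) := by
  simp [PiLp.inner_apply, dotProduct, RCLike.inner_apply, mul_comm]

lemma farkas {n : ℕ} {ι : Type*} [Fintype ι] [DecidableEq ι]
    (a : ι → (Fin n → ℝ)) (w : Fin n → ℝ)
    (hw : ∀ d : Fin n → ℝ, (∀ j, a j ⬝ᵥ d ≤ 0) → w ⬝ᵥ d ≤ 0) :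
    ∃ μ : ι → ℝ, (∀ j, 0 ≤ μ j) ∧ w = ∑ j, μ j • a j := by
  classical
  set E := EuclideanSpace ℝ (Fin n)
  let a' : ι → E := fun j => WithLp.toLp 2 (a j)
  let C : ConvexCone ℝ E :=
    { carrier := {x : E | ∃ μ : ι → ℝ, (∀ j, 0 ≤ μ j) ∧ x = ∑ j, μ j • a' j}
      smul_mem' := by
        rintro c hc x ⟨μ, hμ, rfl⟩
        exact ⟨fun j => c * μ j, fun j => mul_nonneg hc.le (hμ j), by
          rw [Finset.smul_sum]; exact Finset.sum_congr rfl fun j _ => (smul_smul c (μ j) _)⟩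
      add_mem' := by
        rintro x ⟨μ, hμ, rfl⟩ y ⟨κ, hκ, rfl⟩
        exact ⟨fun j => μ j + κ j, fun j => add_nonneg (hμ j) (hκ j), by
          rw [← Finset.sum_add_distrib]; exact Finset.sum_congr rfl fun j _ => (add_smul _ _ _).symm⟩ }
  have hCne : (C : Set E).Nonempty := ⟨0, ⟨0, fun j => le_rfl, by simp⟩⟩
  have hCclosed : IsClosed (C : Set E) := fg_cone_closed a'
  by_cases hwC : (WithLp.toLp 2 w : E) ∈ C
  · obtain ⟨μ, hμ, hsum⟩ := hwC
    exact ⟨μ, hμ, by have := congrArg WithLp.ofLp hsum; erw [WithLp.ofLp_sum] at this; exact this.trans (Finset.sum_congr rfl fun j _ => rfl)⟩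
  · let P : ProperCone ℝ E :=
      { carrier := (C : Set E)
        add_mem' := fun hx hy => C.add_mem hx hy
        zero_mem' := ⟨0, fun j => le_rfl, by simp⟩
        smul_mem' := by
          rintro c x ⟨μ, hμ, rfl⟩
          exact ⟨fun j => (c : ℝ) * μ j, fun j => mul_nonneg c.2 (hμ j), by
            rw [Finset.smul_sum]
            exact Finset.sum_congr rfl fun j _ => (smul_smul (c : ℝ) (μ j) _)⟩
        isClosed' := hCclosed }
    obtain ⟨y, hy1, hy2⟩ :=
      P.hyperplane_separation' (x₀ := (WithLp.toLp 2 w : E)) hwC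
    exfalso
    have haC : ∀ j, a' j ∈ C := by
      intro j
      refine ⟨fun j' => if j' = j then 1 else 0, fun j' => by positivity, ?_⟩
      simp [ite_smul]
    have hd : ∀ j, a j ⬝ᵥ (-(y : Fin n → ℝ)) ≤ 0 := by
      intro j
      have := hy1 (a' j) (haC j)
      rw [euclid_inner_eq_dot] at this
      have h0 : (0:ℝ) ≤ a j ⬝ᵥ (y : Fin n → ℝ) := this
      have hneg : a j ⬝ᵥ (-(y : Fin n → ℝ)) = -(a j ⬝ᵥ (y : Fin n → ℝ)) :=
        dotProduct_neg _ _
      rw [hneg]; linarith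
    have hthis := hw _ hd
    have hneg : w ⬝ᵥ (-(y : Fin n → ℝ)) = -(w ⬝ᵥ (y : Fin n → ℝ)) :=
      dotProduct_neg _ _
    rw [hneg] at hthis
    rw [euclid_inner_eq_dot] at hy2
    have hcomm : (y : Fin n → ℝ) ⬝ᵥ w = w ⬝ᵥ (y : Fin n → ℝ) := dotProduct_comm _ _
    change w ⬝ᵥ (y : Fin n → ℝ) < 0 at hy2
    linarith


variable {N : ℕ}

lemma psd_nonneg {Q : Matrix (Fin N) (Fin N) ℝ} (h : Q.PosSemidef) (x : Fin N → ℝ) :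
    0 ≤ x ⬝ᵥ Q.mulVec x := by simpa using h.dotProduct_mulVec_nonneg x

lemma pd_eq_zero {Q : Matrix (Fin N) (Fin N) ℝ} (h : Q.PosDef) {x : Fin N → ℝ}
    (hx : x ⬝ᵥ Q.mulVec x ≤ 0) : x = 0 := by
  by_contra hne
  have := h.dotProduct_mulVec_pos hne
  simp only [star_trivial] at this
  linarith

lemma dotQ_symm {Q : Matrix (Fin N) (Fin N) ℝ} (hQ : Q.IsSymm) (x y : Fin N → ℝ) :
    x ⬝ᵥ Q.mulVec y = y ⬝ᵥ Q.mulVec x := by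
  rw [Matrix.dotProduct_mulVec, ← Matrix.mulVec_transpose, hQ, dotProduct_comm]

lemma quad_convex {Q : Matrix (Fin N) (Fin N) ℝ} (hQs : Q.IsSymm) (hQ : Q.PosSemidef)
    (c : Fin N → ℝ) (x y : Fin N → ℝ) {a b : ℝ} (ha : 0 ≤ a) (hb : 0 ≤ b) (hab : a + b = 1) :
    (a • x + b • y) ⬝ᵥ Q.mulVec (a • x + b • y) + c ⬝ᵥ (a • x + b • y) ≤
      a * (x ⬝ᵥ Q.mulVec x + c ⬝ᵥ x) + b * (y ⬝ᵥ Q.mulVec y + c ⬝ᵥ y) := by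
  have key : 0 ≤ x ⬝ᵥ Q.mulVec x - 2 * (x ⬝ᵥ Q.mulVec y) + y ⬝ᵥ Q.mulVec y := by
    have h0 := psd_nonneg hQ (x - y)
    rw [Matrix.mulVec_sub, sub_dotProduct, dotProduct_sub,
      dotProduct_sub, dotQ_symm hQs y x] at h0
    linarith
  have hyx : y ⬝ᵥ Q.mulVec x = x ⬝ᵥ Q.mulVec y := dotQ_symm hQs y x
  obtain rfl : b = 1 - a := by linarith
  simp only [Matrix.mulVec_add, Matrix.mulVec_smul, add_dotProduct,
    smul_dotProduct, dotProduct_add, dotProduct_smul, smul_eq_mul, hyx]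
  nlinarith [mul_nonneg (mul_nonneg ha hb) key]

lemma transpose_mulVec_eq_sum {M : ℕ} (A : Matrix (Fin M) (Fin N) ℝ) (μ : Fin M → ℝ) :
    Aᵀ.mulVec μ = ∑ j, μ j • (fun k => A j k) := by
  funext k
  rw [Finset.sum_apply]
  simp only [Pi.smul_apply, smul_eq_mul]
  rw [Matrix.mulVec, dotProduct]
  exact Finset.sum_congr rfl fun j _ => by rw [Matrix.transpose_apply, mul_comm]

/-- KKT multipliers for a linearly constrained strictly convex QP. -/
lemma kkt_exists {M : ℕ} (Q : Matrix (Fin N) (Fin N) ℝ) (hQs : Q.IsSymm) (hQpd : Q.PosDef)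
    (c : Fin N → ℝ) (K : Finset (Fin M)) (a : Fin M → Fin N → ℝ) (β : Fin M → ℝ)
    (x : Fin N → ℝ) (hfeas : ∀ j ∈ K, a j ⬝ᵥ x + β j ≤ 0)
    (hopt : ∀ y : Fin N → ℝ, (∀ j ∈ K, a j ⬝ᵥ y + β j ≤ 0) →
      x ⬝ᵥ Q.mulVec x + c ⬝ᵥ x ≤ y ⬝ᵥ Q.mulVec y + c ⬝ᵥ y) :
    ∃ μ : Fin M → ℝ, (∀ j, 0 ≤ μ j) ∧ (∀ j, j ∉ K → μ j = 0) ∧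
      (∀ j, μ j * (a j ⬝ᵥ x + β j) = 0) ∧
      ∀ k, 2 * Q.mulVec x k + c k + (∑ j, μ j • a j) k = 0 := by
  classical
  set Act : Finset (Fin M) := K.filter (fun j => a j ⬝ᵥ x + β j = 0) with hAct
  set v : Fin M → (Fin N → ℝ) := fun j => if j ∈ Act then a j else 0 with hv
  set w : Fin N → ℝ := -((2:ℝ) • Q.mulVec x + c) with hw
  have hfarkas : ∀ d : Fin N → ℝ, (∀ j, v j ⬝ᵥ d ≤ 0) → w ⬝ᵥ d ≤ 0 := by
    intro d hd
    have hmain : 0 ≤ ((2:ℝ) • Q.mulVec x + c) ⬝ᵥ d := by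
      by_contra hcon
      push_neg at hcon
      set g0 : ℝ := ((2:ℝ) • Q.mulVec x + c) ⬝ᵥ d with hg0
      have hdQd : 0 ≤ d ⬝ᵥ Q.mulVec d := psd_nonneg hQpd.posSemidef d
      set θstar : ℝ := -g0 / (d ⬝ᵥ Q.mulVec d + 1) with hθstar
      have hθstar_pos : 0 < θstar := div_pos (by linarith) (by linarith)
      set S : Finset (Fin M) := K.filter (fun j => 0 < a j ⬝ᵥ d) with hS
      set θ1 : ℝ := if hne : S.Nonempty then
          S.inf' hne (fun j => (-(a j ⬝ᵥ x + β j)) / (a j ⬝ᵥ d)) else 1 with hθ1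
      have hSslack : ∀ j ∈ S, a j ⬝ᵥ x + β j < 0 := by
        intro j hj
        simp only [hS, Finset.mem_filter] at hj
        rcases lt_or_eq_of_le (hfeas j hj.1) with hlt | heq
        · exact hlt
        · exfalso
          have hjAct : j ∈ Act := by simp [hAct, Finset.mem_filter, hj.1, heq]
          have hdj := hd j
          rw [hv] at hdj
          simp only [if_pos hjAct] at hdj
          linarith [hj.2]
      have hθ1_pos : 0 < θ1 := by
        rw [hθ1]
        split
        · rename_i hne
          rw [Finset.lt_inf'_iff]
          intro j hj
          have hjd : 0 < a j ⬝ᵥ d := by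
            simp only [hS, Finset.mem_filter] at hj; exact hj.2
          exact div_pos (by linarith [hSslack j hj]) hjd
        · norm_num
      set θ : ℝ := min θstar θ1 with hθ
      have hθpos : 0 < θ := lt_min hθstar_pos hθ1_pos
      have hfeas' : ∀ j ∈ K, a j ⬝ᵥ (x + θ • d) + β j ≤ 0 := by
        intro j hj
        simp only [dotProduct_add, dotProduct_smul, smul_eq_mul]
        by_cases hjd : 0 < a j ⬝ᵥ d
        · have hjS : j ∈ S := by simp [hS, hj, hjd]
          have hθ1le : θ1 ≤ (-(a j ⬝ᵥ x + β j)) / (a j ⬝ᵥ d) := by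
            rw [hθ1, dif_pos ⟨j, hjS⟩]
            exact Finset.inf'_le _ hjS
          have h1 : θ ≤ (-(a j ⬝ᵥ x + β j)) / (a j ⬝ᵥ d) :=
            le_trans (min_le_right _ _) hθ1le
          have h2 : θ * (a j ⬝ᵥ d) ≤ -(a j ⬝ᵥ x + β j) := by
            rw [← le_div_iff₀ hjd]; exact h1
          linarith
        · push_neg at hjd
          have : θ * (a j ⬝ᵥ d) ≤ 0 := mul_nonpos_of_nonneg_of_nonpos hθpos.le hjd
          linarith [hfeas j hj]
      have hle := hopt _ hfeas'
      simp only [Matrix.mulVec_add, Matrix.mulVec_smul, dotProduct_add,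
        add_dotProduct, smul_dotProduct, dotProduct_smul,
        smul_eq_mul] at hle
      have hxQd : x ⬝ᵥ Q.mulVec d = d ⬝ᵥ Q.mulVec x := dotQ_symm hQs x d
      rw [hxQd] at hle
      have hg0expand : g0 = 2 * (d ⬝ᵥ Q.mulVec x) + c ⬝ᵥ d := by
        rw [hg0]
        simp only [add_dotProduct, smul_dotProduct, smul_eq_mul]
        rw [dotProduct_comm (Q.mulVec x) d]
      have hθθ : θ ≤ θstar := min_le_left _ _
      rw [hθstar, le_div_iff₀ (by linarith : (0:ℝ) < d ⬝ᵥ Q.mulVec d + 1)] at hθθ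
      nlinarith [mul_le_mul_of_nonneg_left hθθ hθpos.le, mul_pos hθpos hθpos]
    rw [hw, neg_dotProduct]
    linarith
  obtain ⟨μ, hμ0, hμsum⟩ := farkas v w hfarkas
  refine ⟨fun j => if j ∈ Act then μ j else 0, ?_, ?_, ?_, ?_⟩
  · intro j; dsimp only; split <;> [exact hμ0 j; exact le_rfl]
  · intro j hj
    have : j ∉ Act := fun hc => hj (Finset.mem_of_mem_filter j hc)
    simp [this]
  · intro j
    by_cases hjA : j ∈ Act
    · have : a j ⬝ᵥ x + β j = 0 := by
        rw [hAct] at hjA; exact (Finset.mem_filter.mp hjA).2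
      simp [this]
    · simp [hjA]
  · intro k
    have hsum : (∑ j, (if j ∈ Act then μ j else 0) • a j) = ∑ j, μ j • v j := by
      refine Finset.sum_congr rfl fun j _ => ?_
      rw [hv]
      by_cases hjA : j ∈ Act <;> simp [hjA]
    rw [hsum, ← hμsum, hw]
    simp only [Pi.neg_apply, Pi.add_apply, Pi.smul_apply, smul_eq_mul]
    ring


lemma dotQ_symm' {N : ℕ} {Q : Matrix (Fin N) (Fin N) ℝ} (hQ : Q.IsSymm) (x y : Fin N → ℝ) :
    x ⬝ᵥ Q.mulVec y = y ⬝ᵥ Q.mulVec x := by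
  rw [Matrix.dotProduct_mulVec, ← Matrix.mulVec_transpose, hQ, dotProduct_comm]

lemma master_identity {N M : ℕ} (Q : Matrix (Fin N) (Fin N) ℝ) (hQs : Q.IsSymm) (hQpd : Q.PosDef)
    (c ν : Fin N → ℝ) (A : Matrix (Fin M) (Fin N) ℝ) (b μ : Fin M → ℝ) :
    (ν ⬝ᵥ Q.mulVec ν + c ⬝ᵥ ν) + μ ⬝ᵥ (A.mulVec ν + b)
      + ((1/4) * (μ ⬝ᵥ (A * Q⁻¹ * Aᵀ).mulVec μ)
         + (1/2) * (((A * Q⁻¹).mulVec c - (2:ℝ) • b) ⬝ᵥ μ))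
    = (1/4) * ((((2:ℝ) • Q.mulVec ν + c + Aᵀ.mulVec μ)) ⬝ᵥ
        Q⁻¹.mulVec ((2:ℝ) • Q.mulVec ν + c + Aᵀ.mulVec μ))
      - (1/4) * (c ⬝ᵥ Q⁻¹.mulVec c) := by
  have hdet : IsUnit Q.det := hQpd.det_pos.ne'.isUnit
  have hRs : Q⁻¹.IsSymm := by
    rw [Matrix.IsSymm, Matrix.transpose_nonsing_inv, hQs]
  have hRQ : ∀ z : Fin N → ℝ, Q⁻¹.mulVec (Q.mulVec z) = z := by
    intro z
    rw [Matrix.mulVec_mulVec, Matrix.nonsing_inv_mul Q hdet, Matrix.one_mulVec]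
  have hAm : ∀ z : Fin N → ℝ, μ ⬝ᵥ A.mulVec z = Aᵀ.mulVec μ ⬝ᵥ z := by
    intro z
    rw [Matrix.dotProduct_mulVec, Matrix.mulVec_transpose]
  -- expand the matrix products in the dual objective
  have hprod1 : (A * Q⁻¹ * Aᵀ).mulVec μ = A.mulVec (Q⁻¹.mulVec (Aᵀ.mulVec μ)) := by
    rw [Matrix.mulVec_mulVec, Matrix.mulVec_mulVec]
  have hprod2 : (A * Q⁻¹).mulVec c = A.mulVec (Q⁻¹.mulVec c) := by
    rw [Matrix.mulVec_mulVec]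
  rw [hprod1, hprod2]
  -- expand everything
  simp only [Matrix.mulVec_add, Matrix.mulVec_smul, dotProduct_add,
    add_dotProduct, dotProduct_smul, smul_dotProduct,
    sub_dotProduct, dotProduct_sub, smul_eq_mul]
  rw [hAm, hAm]
  -- atom reductions
  have h1 : Q.mulVec ν ⬝ᵥ Q⁻¹.mulVec (Q.mulVec ν) = ν ⬝ᵥ Q.mulVec ν := by
    rw [hRQ, dotProduct_comm]
  have h2 : Q.mulVec ν ⬝ᵥ Q⁻¹.mulVec c = c ⬝ᵥ ν := by
    rw [dotQ_symm' hRs, hRQ]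
  have h3 : Q.mulVec ν ⬝ᵥ Q⁻¹.mulVec (Aᵀ.mulVec μ) = Aᵀ.mulVec μ ⬝ᵥ ν := by
    rw [dotQ_symm' hRs, hRQ]
  have h4 : c ⬝ᵥ Q⁻¹.mulVec (Q.mulVec ν) = c ⬝ᵥ ν := by rw [hRQ]
  have h5 : Aᵀ.mulVec μ ⬝ᵥ Q⁻¹.mulVec (Q.mulVec ν) = Aᵀ.mulVec μ ⬝ᵥ ν := by rw [hRQ]
  have h6 : Aᵀ.mulVec μ ⬝ᵥ Q⁻¹.mulVec c = c ⬝ᵥ Q⁻¹.mulVec (Aᵀ.mulVec μ) :=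
    dotQ_symm' hRs _ _
  have h8 : A.mulVec (Q⁻¹.mulVec c) ⬝ᵥ μ = c ⬝ᵥ Q⁻¹.mulVec (Aᵀ.mulVec μ) := by
    rw [dotProduct_comm, hAm, h6]
  have h9 : b ⬝ᵥ μ = μ ⬝ᵥ b := dotProduct_comm _ _
  rw [h1, h2, h3, h4, h5, h6, h8, h9]
  ring

open Matrix

set_option maxHeartbeats 1000000 in
/-- Under strict feasibility of the `i`-th constraint, the optimal
value of the regularized LCQP, as a function of a perturbation `t` of the
`i`-th constraint constant, is finite and convex near `t = 0`, and its convex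
subdifferential at `0` is exactly the (nonempty and bounded) set of `i`-th
components of optimal dual solutions. -/
theorem lcqp_value_subdifferential_constraint_constant
    (N M : ℕ) (hN : 0 < N) (hM : 0 < M)
    (Q : Matrix (Fin N) (Fin N) ℝ) (hQsymm : Q.IsSymm) (hQpd : Q.PosDef)
    (c : Fin N → ℝ) (A : Matrix (Fin M) (Fin N) ℝ)
    (Ω : (Fin M → ℝ) → Set (Fin N → ℝ))
    (hΩ : ∀ b, Ω b = {ν | ∀ i, A.mulVec ν i + b i ≤ 0})
    (V : (Fin M → ℝ) → ℝ)
    (hV : ∀ b, (Ω b).Nonempty →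
      IsLeast ((fun ν => ν ⬝ᵥ Q.mulVec ν + c ⬝ᵥ ν) '' Ω b) (V b))
    (h : (Fin M → ℝ) → (Fin M → ℝ) → ℝ)
    (hh : ∀ μ b, h μ b = (1 / 4) * (μ ⬝ᵥ (A * Q⁻¹ * Aᵀ).mulVec μ) +
      (1 / 2) * (((A * Q⁻¹).mulVec c - (2 : ℝ) • b) ⬝ᵥ μ))
    (b : Fin M → ℝ) (i : Fin M)
    (hbne : (Ω b).Nonempty)
    (νbar : Fin N → ℝ) (hνbar : νbar ∈ Ω b)
    (hstrict : A.mulVec νbar i + b i < 0) :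
    ∃ δ : ℝ, 0 < δ ∧
      (∀ t : ℝ, |t| < δ → (Ω (b + t • (Pi.single i 1 : Fin M → ℝ))).Nonempty) ∧
      ConvexOn ℝ (Set.Ioo (-δ) δ) (fun t => V (b + t • (Pi.single i 1 : Fin M → ℝ))) ∧
      ({g : ℝ | ∀ t ∈ Set.Ioo (-δ) δ,
          V b + g * t ≤ V (b + t • (Pi.single i 1 : Fin M → ℝ))} =
        {x : ℝ | ∃ μstar : Fin M → ℝ, 0 ≤ μstar ∧
          (∀ μ : Fin M → ℝ, 0 ≤ μ → h μstar b ≤ h μ b) ∧ μstar i = x}) ∧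
      ({x : ℝ | ∃ μstar : Fin M → ℝ, 0 ≤ μstar ∧
          (∀ μ : Fin M → ℝ, 0 ≤ μ → h μstar b ≤ h μ b) ∧ μstar i = x}).Nonempty ∧
      Bornology.IsBounded {x : ℝ | ∃ μstar : Fin M → ℝ, 0 ≤ μstar ∧
          (∀ μ : Fin M → ℝ, 0 ≤ μ → h μstar b ≤ h μ b) ∧ μstar i = x} := by
  classical
  set s1 : Fin M → ℝ := Pi.single i 1 with hs1def
  have hsi : s1 i = 1 := Pi.single_eq_same i 1
  have hsj : ∀ j, j ≠ i → s1 j = 0 := fun j hj => Pi.single_eq_of_ne hj 1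
  set δ : ℝ := -(A.mulVec νbar i + b i) with hδdef
  have hδ : 0 < δ := by rw [hδdef]; linarith
  -- membership in perturbed feasible sets
  have hmem : ∀ (t : ℝ) (ν : Fin N → ℝ), ν ∈ Ω (b + t • s1) ↔
      (∀ j, A.mulVec ν j + b j + t * s1 j ≤ 0) := by
    intro t ν
    rw [hΩ]
    simp only [Set.mem_setOf_eq, Pi.add_apply, Pi.smul_apply, smul_eq_mul]
    exact forall_congr' fun j => by rw [add_assoc]
  have hνbar' : ∀ j, A.mulVec νbar j + b j ≤ 0 := by rw [hΩ] at hνbar; exact hνbar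
  -- feasibility of perturbed problems
  have hfeast : ∀ t : ℝ, |t| < δ → νbar ∈ Ω (b + t • s1) := by
    intro t ht
    rw [hmem]
    intro j
    by_cases hj : j = i
    · subst hj
      rw [hsi, mul_one]
      have := abs_lt.mp ht
      rw [hδdef] at this
      linarith [this.2]
    · rw [hsj j hj, mul_zero, add_zero]
      exact hνbar' j
  have hne : ∀ t : ℝ, |t| < δ → (Ω (b + t • s1)).Nonempty :=
    fun t ht => ⟨νbar, hfeast t ht⟩
  -- primal optimum at b
  obtain ⟨νstar, hνstarΩ, hνstarV⟩ := (hV b hbne).1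
  have hνstar' : ∀ j, A.mulVec νstar j + b j ≤ 0 := by rw [hΩ] at hνstarΩ; exact hνstarΩ
  have hVlb : ∀ b' : Fin M → ℝ, (Ω b').Nonempty → ∀ ν ∈ Ω b',
      V b' ≤ ν ⬝ᵥ Q.mulVec ν + c ⬝ᵥ ν :=
    fun b' hb' ν hν => (hV b' hb').2 ⟨ν, hν, rfl⟩
  have hVb : V b = νstar ⬝ᵥ Q.mulVec νstar + c ⬝ᵥ νstar := hνstarV.symm
  -- b + 0 • s1 = b
  have hb0 : b + (0:ℝ) • s1 = b := by simp
  -- three-point convexity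
  have h3pt : ∀ (t1 t2 a' b' : ℝ), 0 ≤ a' → 0 ≤ b' → a' + b' = 1 →
      (Ω (b + t1 • s1)).Nonempty → (Ω (b + t2 • s1)).Nonempty →
      V (b + (a' * t1 + b' * t2) • s1) ≤ a' * V (b + t1 • s1) + b' * V (b + t2 • s1) := by
    intro t1 t2 a' b' ha' hb' hab hne1 hne2
    obtain ⟨ν1, hν1, hf1⟩ := (hV _ hne1).1
    obtain ⟨ν2, hν2, hf2⟩ := (hV _ hne2).1
    have hf1' : ν1 ⬝ᵥ Q.mulVec ν1 + c ⬝ᵥ ν1 = V (b + t1 • s1) := hf1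
    have hf2' : ν2 ⬝ᵥ Q.mulVec ν2 + c ⬝ᵥ ν2 = V (b + t2 • s1) := hf2
    have hν1' := (hmem t1 ν1).mp hν1
    have hν2' := (hmem t2 ν2).mp hν2
    have hνmΩ : a' • ν1 + b' • ν2 ∈ Ω (b + (a' * t1 + b' * t2) • s1) := by
      rw [hmem]
      intro j
      have e1 := hν1' j
      have e2 := hν2' j
      have hmv : A.mulVec (a' • ν1 + b' • ν2) j =
          a' * A.mulVec ν1 j + b' * A.mulVec ν2 j := by
        rw [Matrix.mulVec_add, Matrix.mulVec_smul, Matrix.mulVec_smul]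
        simp
      rw [hmv]
      have e3 : a' * ((A *ᵥ ν1) j + b j + t1 * s1 j) + b' * ((A *ᵥ ν2) j + b j + t2 * s1 j) ≤ 0 :=
        add_nonpos (mul_nonpos_of_nonneg_of_nonpos ha' e1)
          (mul_nonpos_of_nonneg_of_nonpos hb' e2)
      have hbj : a' * b j + b' * b j = b j := by rw [← add_mul, hab, one_mul]
      nlinarith [e3, hbj]
    calc V (b + (a' * t1 + b' * t2) • s1)
        ≤ (a' • ν1 + b' • ν2) ⬝ᵥ Q.mulVec (a' • ν1 + b' • ν2) + c ⬝ᵥ (a' • ν1 + b' • ν2) :=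
          hVlb _ ⟨_, hνmΩ⟩ _ hνmΩ
      _ ≤ a' * (ν1 ⬝ᵥ Q.mulVec ν1 + c ⬝ᵥ ν1) + b' * (ν2 ⬝ᵥ Q.mulVec ν2 + c ⬝ᵥ ν2) :=
          quad_convex hQsymm hQpd.posSemidef c ν1 ν2 ha' hb' hab
      _ = a' * V (b + t1 • s1) + b' * V (b + t2 • s1) := by rw [hf1', hf2']
  -- master identity with dual objective h
  have hMI : ∀ (ν : Fin N → ℝ) (μ : Fin M → ℝ),
      (ν ⬝ᵥ Q.mulVec ν + c ⬝ᵥ ν) + μ ⬝ᵥ (A.mulVec ν + b) + h μ b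
      = (1/4) * ((((2:ℝ) • Q.mulVec ν + c + Aᵀ.mulVec μ)) ⬝ᵥ
          Q⁻¹.mulVec ((2:ℝ) • Q.mulVec ν + c + Aᵀ.mulVec μ))
        - (1/4) * (c ⬝ᵥ Q⁻¹.mulVec c) := by
    intro ν μ
    rw [hh]
    exact master_identity Q hQsymm hQpd c ν A b μ
  have hRpsd : Q⁻¹.PosSemidef := hQpd.inv.posSemidef
  -- KKT at b
  have hKKT : ∃ μ : Fin M → ℝ, (∀ j, 0 ≤ μ j) ∧
      (μ ⬝ᵥ (A.mulVec νstar + b) = 0) ∧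
      ((2:ℝ) • Q.mulVec νstar + c + Aᵀ.mulVec μ = 0) := by
    obtain ⟨μ, hμ0, _, hμcompl, hμstat⟩ := kkt_exists Q hQsymm hQpd c Finset.univ
      (fun j k => A j k) b νstar (fun j _ => hνstar' j)
      (fun y hy =>
        le_trans (le_of_eq hνstarV)
          (hVlb b hbne y (by rw [hΩ]; exact fun j => hy j (Finset.mem_univ j))))
    refine ⟨μ, hμ0, ?_, ?_⟩
    · have : μ ⬝ᵥ (A.mulVec νstar + b) = ∑ j, μ j * (A.mulVec νstar j + b j) := by
        simp [dotProduct]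
      rw [this]
      exact Finset.sum_eq_zero fun j _ => hμcompl j
    · funext k
      have := hμstat k
      rw [← transpose_mulVec_eq_sum A μ] at this
      simp only [Pi.add_apply, Pi.smul_apply, smul_eq_mul, Pi.zero_apply]
      linarith
  obtain ⟨μs, hμs0, hμscompl, hμsstat⟩ := hKKT
  -- value of h at a KKT multiplier
  have hdualval : ∀ μ : Fin M → ℝ, (μ ⬝ᵥ (A.mulVec νstar + b) = 0) →
      ((2:ℝ) • Q.mulVec νstar + c + Aᵀ.mulVec μ = 0) →
      h μ b = - (1/4) * (c ⬝ᵥ Q⁻¹.mulVec c) - V b := by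
    intro μ hcompl hstat
    have := hMI νstar μ
    rw [hcompl, hstat] at this
    simp only [zero_dotProduct, Matrix.mulVec_zero, mul_zero] at this
    rw [hVb]
    linarith
  -- weak duality
  have hweak : ∀ μ : Fin M → ℝ, (∀ j, 0 ≤ μ j) →
      - (1/4) * (c ⬝ᵥ Q⁻¹.mulVec c) - V b ≤ h μ b := by
    intro μ hμ0
    have hmi := hMI νstar μ
    have hquad : 0 ≤ ((((2:ℝ) • Q.mulVec νstar + c + Aᵀ.mulVec μ)) ⬝ᵥ
        Q⁻¹.mulVec ((2:ℝ) • Q.mulVec νstar + c + Aᵀ.mulVec μ)) := psd_nonneg hRpsd _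
    have hdot : μ ⬝ᵥ (A.mulVec νstar + b) ≤ 0 := by
      apply Finset.sum_nonpos
      intro j _
      exact mul_nonpos_of_nonneg_of_nonpos (hμ0 j) (by simpa using hνstar' j)
    rw [hVb]
    linarith
  have hμsopt : ∀ μ : Fin M → ℝ, 0 ≤ μ → h μs b ≤ h μ b := by
    intro μ hμ0
    rw [hdualval μs hμscompl hμsstat]
    exact hweak μ (fun j => hμ0 j)
  -- characterization of dual optima
  have hchar : ∀ μ : Fin M → ℝ, (∀ j, 0 ≤ μ j) → (∀ μ' : Fin M → ℝ, 0 ≤ μ' → h μ b ≤ h μ' b) →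
      (μ ⬝ᵥ (A.mulVec νstar + b) = 0) ∧
      ((2:ℝ) • Q.mulVec νstar + c + Aᵀ.mulVec μ = 0) := by
    intro μ hμ0 hopt
    have h1 : h μ b ≤ h μs b := hopt μs (fun j => hμs0 j)
    have hμsval : h μs b = - (1/4) * (c ⬝ᵥ Q⁻¹.mulVec c) - V b := hdualval μs hμscompl hμsstat
    have hmi := hMI νstar μ
    have hquad : 0 ≤ (((2:ℝ) • Q.mulVec νstar + c + Aᵀ.mulVec μ) ⬝ᵥ
        Q⁻¹.mulVec ((2:ℝ) • Q.mulVec νstar + c + Aᵀ.mulVec μ)) := psd_nonneg hRpsd _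
    have hdot : μ ⬝ᵥ (A.mulVec νstar + b) ≤ 0 := by
      apply Finset.sum_nonpos
      intro j _
      exact mul_nonpos_of_nonneg_of_nonpos (hμ0 j) (by simpa using hνstar' j)
    have hfν : νstar ⬝ᵥ Q.mulVec νstar + c ⬝ᵥ νstar = V b := hνstarV
    have he0 : ((2:ℝ) • Q.mulVec νstar + c + Aᵀ.mulVec μ) = 0 := by
      apply pd_eq_zero hQpd.inv
      linarith
    rw [he0] at hmi
    simp only [zero_dotProduct, Matrix.mulVec_zero, mul_zero] at hmi
    have hweakμ := hweak μ hμ0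
    exact ⟨by linarith, he0⟩
  -- D ⊆ S
  have hDS : ∀ μ : Fin M → ℝ, (∀ j, 0 ≤ μ j) →
      (μ ⬝ᵥ (A.mulVec νstar + b) = 0) →
      ((2:ℝ) • Q.mulVec νstar + c + Aᵀ.mulVec μ = 0) →
      ∀ t ∈ Set.Ioo (-δ) δ, V b + μ i * t ≤ V (b + t • s1) := by
    intro μ hμ0 hcompl hstat t ht
    have hnet : (Ω (b + t • s1)).Nonempty := hne t (abs_lt.mpr ⟨ht.1, ht.2⟩)
    obtain ⟨νt, hνt, hft⟩ := (hV _ hnet).1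
    have hft' : νt ⬝ᵥ Q.mulVec νt + c ⬝ᵥ νt = V (b + t • s1) := hft
    have hνt' := (hmem t νt).mp hνt
    have hmi := hMI νt μ
    have hquad : 0 ≤ (((2:ℝ) • Q.mulVec νt + c + Aᵀ.mulVec μ) ⬝ᵥ
        Q⁻¹.mulVec ((2:ℝ) • Q.mulVec νt + c + Aᵀ.mulVec μ)) := psd_nonneg hRpsd _
    have hhval : h μ b = - (1/4) * (c ⬝ᵥ Q⁻¹.mulVec c) - V b := hdualval μ hcompl hstat
    have hdot : μ ⬝ᵥ (A.mulVec νt + b) ≤ -(t * μ i) := by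
      have hterm : ∀ j, μ j * (A.mulVec νt j + b j) ≤ -(t * (μ j * s1 j)) := by
        intro j
        have := hνt' j
        nlinarith [hμ0 j, mul_le_mul_of_nonneg_left (by linarith :
          A.mulVec νt j + b j ≤ -(t * s1 j)) (hμ0 j)]
      have hd : μ ⬝ᵥ (A.mulVec νt + b) = ∑ j, μ j * (A.mulVec νt j + b j) := by
        simp [dotProduct]
      rw [hd]
      calc ∑ j, μ j * (A.mulVec νt j + b j) ≤ ∑ j, -(t * (μ j * s1 j)) :=
            Finset.sum_le_sum fun j _ => hterm j
        _ = -(t * ∑ j, μ j * s1 j) := by rw [Finset.mul_sum, ← Finset.sum_neg_distrib]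
        _ = -(t * μ i) := by
            rw [show (∑ j, μ j * s1 j) = μ ⬝ᵥ s1 from rfl, hs1def,
              dotProduct_single, mul_one]
    linarith
  -- S ⊆ D
  have hSD : ∀ g : ℝ, (∀ t ∈ Set.Ioo (-δ) δ, V b + g * t ≤ V (b + t • s1)) →
      ∃ μ : Fin M → ℝ, (0 ≤ μ) ∧ (∀ μ' : Fin M → ℝ, 0 ≤ μ' → h μ b ≤ h μ' b) ∧ μ i = g := by
    intro g hg
    -- the subgradient inequality extends to all feasible perturbations
    have hglob : ∀ t0 : ℝ, (Ω (b + t0 • s1)).Nonempty → V b + g * t0 ≤ V (b + t0 • s1) := by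
      intro t0 hne0
      by_cases hcase : |t0| < δ
      · have := abs_lt.mp hcase
        exact hg t0 ⟨this.1, this.2⟩
      · push_neg at hcase
        have ht0ne : t0 ≠ 0 := by
          intro h0
          rw [h0, abs_zero] at hcase
          linarith
        have habs : 0 < |t0| := abs_pos.mpr ht0ne
        set θ : ℝ := (δ/2) / |t0| with hθdef
        have hθpos : 0 < θ := div_pos (by linarith) habs
        have hθlt : θ ≤ 1/2 := by
          rw [hθdef, div_le_iff₀ habs]
          nlinarith
        have h3 := h3pt t0 0 θ (1-θ) hθpos.le (by linarith) (by ring) hne0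
          (by rw [hb0]; exact hbne)
        rw [hb0] at h3
        have ht' : θ * t0 + (1-θ) * 0 = θ * t0 := by ring
        rw [ht'] at h3
        have htmem : θ * t0 ∈ Set.Ioo (-δ) δ := by
          have : |θ * t0| = δ/2 := by
            rw [abs_mul, abs_of_pos hθpos, hθdef, div_mul_cancel₀]
            exact ne_of_gt habs
          have := abs_lt.mp (by rw [this]; linarith : |θ * t0| < δ)
          exact ⟨this.1, this.2⟩
        have hsub := hg (θ * t0) htmem
        -- V b + g θ t0 ≤ V(b + θt0 s1) ≤ θ V(bt0) + (1-θ) V b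
        have hcomb : θ * (V b + g * t0) ≤ θ * V (b + t0 • s1) := by nlinarith
        nlinarith [hcomb, hθpos]
    -- g is nonnegative
    have hg0 : 0 ≤ g := by
      have hmemX : νstar ∈ Ω (b + (-(δ/2)) • s1) := by
        rw [hmem]
        intro j
        by_cases hj : j = i
        · subst hj
          rw [hsi, mul_one]
          linarith [hνstar' j]
        · rw [hsj j hj, mul_zero, add_zero]
          exact hνstar' j
      have h1 := hg (-(δ/2)) ⟨by linarith, by linarith⟩
      have h2 : V (b + (-(δ/2)) • s1) ≤ V b :=
        hνstarV ▸ hVlb _ ⟨νstar, hmemX⟩ νstar hmemX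
      nlinarith
    -- complementary slackness for g
    have hgcompl : g * (A.mulVec νstar i + b i) = 0 := by
      rcases lt_or_eq_of_le (hνstar' i) with hlt | heq
      · set t0 : ℝ := min δ (-(A.mulVec νstar i + b i)) / 2 with ht0def
        have hmin1 : min δ (-(A.mulVec νstar i + b i)) ≤ δ := min_le_left _ _
        have hmin2 : min δ (-(A.mulVec νstar i + b i)) ≤ -(A.mulVec νstar i + b i) :=
          min_le_right _ _
        have ht0pos : 0 < t0 := by
          rw [ht0def]
          have : 0 < min δ (-(A.mulVec νstar i + b i)) := lt_min hδ (by linarith)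
          linarith
        have ht0δ : t0 < δ := by rw [ht0def]; linarith
        have hmemX : νstar ∈ Ω (b + t0 • s1) := by
          rw [hmem]
          intro j
          by_cases hj : j = i
          · subst hj
            rw [hsi, mul_one]
            rw [ht0def]
            linarith
          · rw [hsj j hj, mul_zero, add_zero]
            exact hνstar' j
        have h1 := hg t0 ⟨by linarith, ht0δ⟩
        have h2 : V (b + t0 • s1) ≤ V b :=
          hνstarV ▸ hVlb _ ⟨νstar, hmemX⟩ νstar hmemX
        have hgle : g ≤ 0 := by nlinarith
        have hgz : g = 0 := le_antisymm hgle hg0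
        rw [hgz, zero_mul]
      · rw [heq, mul_zero]
    -- νstar is optimal for the reduced problem
    have hredfeas : ∀ j ∈ Finset.univ.erase i, (fun k => A j k) ⬝ᵥ νstar + b j ≤ 0 :=
      fun j _ => hνstar' j
    have hredopt : ∀ y : Fin N → ℝ, (∀ j ∈ Finset.univ.erase i, (fun k => A j k) ⬝ᵥ y + b j ≤ 0) →
        νstar ⬝ᵥ Q.mulVec νstar + (c + g • (fun k => A i k)) ⬝ᵥ νstar ≤
        y ⬝ᵥ Q.mulVec y + (c + g • (fun k => A i k)) ⬝ᵥ y := by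
      intro y hy
      set t0 : ℝ := -(A.mulVec y i + b i) with ht0def
      have hyΩ : y ∈ Ω (b + t0 • s1) := by
        rw [hmem]
        intro j
        by_cases hj : j = i
        · subst hj
          rw [hsi, mul_one, ht0def]
          linarith
        · rw [hsj j hj, mul_zero, add_zero]
          exact hy j (Finset.mem_erase.mpr ⟨hj, Finset.mem_univ j⟩)
      have h1 := hglob t0 ⟨y, hyΩ⟩
      have h2 : V (b + t0 • s1) ≤ y ⬝ᵥ Q.mulVec y + c ⬝ᵥ y := hVlb _ ⟨y, hyΩ⟩ y hyΩ
      have hci : ∀ z : Fin N → ℝ, (c + g • (fun k => A i k)) ⬝ᵥ z =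
          c ⬝ᵥ z + g * ((fun k => A i k) ⬝ᵥ z) := by
        intro z
        rw [add_dotProduct, smul_dotProduct, smul_eq_mul]
      rw [hci, hci]
      have hrowζ : ((fun k => A i k) ⬝ᵥ νstar) = A.mulVec νstar i := rfl
      have hrowy : ((fun k => A i k) ⬝ᵥ y) = A.mulVec y i := rfl
      rw [hrowζ, hrowy]
      have hfν : νstar ⬝ᵥ Q.mulVec νstar + c ⬝ᵥ νstar = V b := hνstarV
      rw [ht0def] at h1
      linarith
    obtain ⟨lam, hlam0, hlamK, hlamcompl, hlamstat⟩ :=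
      kkt_exists Q hQsymm hQpd (c + g • (fun k => A i k)) (Finset.univ.erase i)
        (fun j k => A j k) b νstar hredfeas hredopt
    have hlami : lam i = 0 := hlamK i (by simp)
    refine ⟨fun j => if j = i then g else lam j, ?_, ?_, by simp⟩
    · intro j
      dsimp only
      split
      · exact hg0
      · exact hlam0 j
    · -- dual optimality via KKT characterization
      set μ : Fin M → ℝ := fun j => if j = i then g else lam j with hμdef
      have hμcompl : μ ⬝ᵥ (A.mulVec νstar + b) = 0 := by
        have hd : μ ⬝ᵥ (A.mulVec νstar + b) = ∑ j, μ j * (A.mulVec νstar j + b j) := by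
          simp [dotProduct]
        rw [hd]
        apply Finset.sum_eq_zero
        intro j _
        rw [hμdef]
        dsimp only
        by_cases hj : j = i
        · subst hj
          rw [if_pos rfl]
          exact hgcompl
        · rw [if_neg hj]
          exact hlamcompl j
      have hμstat : (2:ℝ) • Q.mulVec νstar + c + Aᵀ.mulVec μ = 0 := by
        funext k
        have hst := hlamstat k
        have hsplit : (∑ j, μ j • (fun k => A j k)) k =
            (∑ j, lam j • (fun k => A j k)) k + g * A i k := by
          rw [Finset.sum_apply, Finset.sum_apply,
            ← Finset.sum_erase_add _ _ (Finset.mem_univ i),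
            ← Finset.sum_erase_add _ _ (Finset.mem_univ i)]
          have hsame : ∀ j ∈ Finset.univ.erase i,
              (μ j • (fun k => A j k)) k = (lam j • (fun k => A j k)) k := by
            intro j hj
            rw [hμdef]
            simp only [Pi.smul_apply, smul_eq_mul]
            rw [if_neg (Finset.mem_erase.mp hj).1]
          rw [Finset.sum_congr rfl hsame]
          simp only [Pi.smul_apply, smul_eq_mul, hμdef, if_pos rfl, hlami]
          ring
        rw [← transpose_mulVec_eq_sum A μ] at hsplit
        simp only [Pi.add_apply, Pi.smul_apply, smul_eq_mul, Pi.zero_apply]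
        rw [hsplit]
        simp only [Pi.add_apply, Pi.smul_apply, smul_eq_mul, Pi.zero_apply] at hst
        linarith
      intro μ' hμ'0
      rw [hdualval μ hμcompl hμstat]
      exact hweak μ' (fun j => hμ'0 j)
  refine ⟨δ, hδ, hne, ?_, ?_, ?_, ?_⟩
  · -- convexity
    refine ⟨convex_Ioo _ _, ?_⟩
    intro t1 ht1 t2 ht2 a' b' ha' hb' hab
    simp only [smul_eq_mul]
    apply h3pt t1 t2 a' b' ha' hb' hab
    · exact hne t1 (abs_lt.mpr ⟨ht1.1, ht1.2⟩)
    · exact hne t2 (abs_lt.mpr ⟨ht2.1, ht2.2⟩)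
  · -- set equality
    ext g
    simp only [Set.mem_setOf_eq]
    constructor
    · intro hg
      exact hSD g hg
    · rintro ⟨μ, hμ0, hμopt, rfl⟩
      obtain ⟨hcompl, hstat⟩ := hchar μ (fun j => hμ0 j) hμopt
      exact hDS μ (fun j => hμ0 j) hcompl hstat
  · -- nonempty
    exact ⟨μs i, μs, (fun j => hμs0 j), hμsopt, rfl⟩
  · -- bounded
    apply Bornology.IsBounded.subset (Metric.isBounded_Icc 0
      ((νbar ⬝ᵥ Q.mulVec νbar + c ⬝ᵥ νbar - V b) / δ))
    rintro x ⟨μ, hμ0, hμopt, rfl⟩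
    obtain ⟨hcompl, hstat⟩ := hchar μ (fun j => hμ0 j) hμopt
    have hmi := hMI νbar μ
    have hhval : h μ b = - (1/4) * (c ⬝ᵥ Q⁻¹.mulVec c) - V b := hdualval μ hcompl hstat
    have hquad : 0 ≤ ((((2:ℝ) • Q.mulVec νbar + c + Aᵀ.mulVec μ)) ⬝ᵥ
        Q⁻¹.mulVec ((2:ℝ) • Q.mulVec νbar + c + Aᵀ.mulVec μ)) := psd_nonneg hRpsd _
    -- μ ⬝ (Aνbar + b) ≤ μ i * (Aνbar i + b i) = -μ i * δ
    have hsum : μ ⬝ᵥ (A.mulVec νbar + b) ≤ μ i * (A.mulVec νbar i + b i) := by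
      have hd : μ ⬝ᵥ (A.mulVec νbar + b) =
          ∑ j, μ j * (A.mulVec νbar j + b j) := by
        simp [dotProduct]
      rw [hd, ← Finset.sum_erase_add _ _ (Finset.mem_univ i)]
      have hrest : ∑ j ∈ Finset.univ.erase i, μ j * (A.mulVec νbar j + b j) ≤ 0 := by
        apply Finset.sum_nonpos
        intro j _
        exact mul_nonpos_of_nonneg_of_nonpos (hμ0 j) (hνbar' j)
      linarith
    have : μ i * (A.mulVec νbar i + b i) = -(μ i * δ) := by rw [hδdef]; ring
    rw [this] at hsum
    constructor
    · exact hμ0 i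
    · rw [le_div_iff₀ hδ]
      nlinarith [hμ0 i]
end

section
/- Let p be a positive integer, w̄ ∈ ℝ^p, and B : ℝ^p → ℝ^M a function differentiable at w̄ with Jacobian J := ∇B(w̄) ∈ ℝ^{M×p}. Suppose there exists ν̄ ∈ ℝ^N with Aν̄ + B(w̄) < 0 componentwise (strict feasibility). Then for every optimal dual solution μ* ∈ argmin_{μ ∈ ℝ^M, μ ≥ 0} h(μ; B(w̄)), the vector Jᵀμ* is a regular (Fréchet) subgradient of the composite function w ↦ V(B(w)) at w̄; that is, liminf over w → w̄, w ≠ w̄, of [V(B(w)) − V(B(w̄)) − ⟨Jᵀμ*, w − w̄⟩] / ‖w − w̄‖ is ≥ 0. -/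
open Matrix

section Aux
variable {M N : ℕ}

lemma dot_mulVec_flip (A : Matrix (Fin M) (Fin N) ℝ) (x : Fin M → ℝ) (y : Fin N → ℝ) :
    x ⬝ᵥ A *ᵥ y = (Aᵀ *ᵥ x) ⬝ᵥ y := by
  rw [Matrix.dotProduct_mulVec, Matrix.mulVec_transpose]

lemma psd_dot (S : Matrix (Fin M) (Fin M) ℝ) (hS : S.PosSemidef) (x : Fin M → ℝ) :
    0 ≤ x ⬝ᵥ S *ᵥ x := by
  simpa using hS.re_dotProduct_nonneg x

lemma l2norm_ge_norm {k : ℕ} (u : Fin k → ℝ) : ‖u‖ ≤ l2norm u := by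
  have h0 : (0:ℝ) ≤ l2norm u := Real.sqrt_nonneg _
  rw [pi_norm_le_iff_of_nonneg h0]
  intro i
  have h1 : u i ^ 2 ≤ ∑ j, u j ^ 2 :=
    Finset.single_le_sum (fun j _ => sq_nonneg (u j)) (Finset.mem_univ i)
  calc ‖u i‖ = Real.sqrt (u i ^ 2) := by rw [Real.sqrt_sq_eq_abs]; rfl
    _ ≤ l2norm u := Real.sqrt_le_sqrt h1

lemma dot_lower (μ e : Fin M → ℝ) (hμ : 0 ≤ μ) :
    -((∑ i, μ i) * ‖e‖) ≤ μ ⬝ᵥ e := by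
  have h1 : ∀ i, μ i * (-‖e‖) ≤ μ i * e i := by
    intro i
    refine mul_le_mul_of_nonneg_left ?_ (hμ i)
    have h2 := norm_le_pi_norm e i
    have h3 : |e i| ≤ ‖e‖ := by simpa [Real.norm_eq_abs] using h2
    linarith [(abs_le.mp h3).1]
  calc -((∑ i, μ i) * ‖e‖) = ∑ i, μ i * (-‖e‖) := by rw [← Finset.sum_mul]; ring
    _ ≤ ∑ i, μ i * e i := Finset.sum_le_sum (fun i _ => h1 i)
    _ = μ ⬝ᵥ e := rfl

end Aux

set_option maxHeartbeats 1000000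

/-- Under strict feasibility, `Jᵀμ*` is a regular (Fréchet)
subgradient of the composite value function `w ↦ V(B(w))` at `w̄`, for any
optimal dual solution `μ*`; the regular-subgradient inequality is stated in
its `ε`–`δ` (liminf ≥ 0) form. -/
theorem lcqp_value_regular_subgradient_neural_weights
    (N M p : ℕ) (hN : 0 < N) (hM : 0 < M) (hp : 0 < p)
    (Q : Matrix (Fin N) (Fin N) ℝ) (hQsymm : Q.IsSymm) (hQpd : Q.PosDef)
    (c : Fin N → ℝ) (A : Matrix (Fin M) (Fin N) ℝ)
    (Ω : (Fin M → ℝ) → Set (Fin N → ℝ))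
    (hΩ : ∀ b, Ω b = {ν | ∀ i, A.mulVec ν i + b i ≤ 0})
    (V : (Fin M → ℝ) → ℝ)
    (hV : ∀ b, (Ω b).Nonempty →
      IsLeast ((fun ν => ν ⬝ᵥ Q.mulVec ν + c ⬝ᵥ ν) '' Ω b) (V b))
    (h : (Fin M → ℝ) → (Fin M → ℝ) → ℝ)
    (hh : ∀ μ b, h μ b = (1 / 4) * (μ ⬝ᵥ (A * Q⁻¹ * Aᵀ).mulVec μ) +
      (1 / 2) * (((A * Q⁻¹).mulVec c - (2 : ℝ) • b) ⬝ᵥ μ))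
    (wbar : Fin p → ℝ) (B : (Fin p → ℝ) → (Fin M → ℝ))
    (J : Matrix (Fin M) (Fin p) ℝ)
    (hB : HasFDerivAt B (LinearMap.toContinuousLinearMap J.mulVecLin) wbar)
    (νbar : Fin N → ℝ)
    (hstrict : ∀ i, A.mulVec νbar i + B wbar i < 0)
    (μstar : Fin M → ℝ) (hμnonneg : 0 ≤ μstar)
    (hμmin : ∀ μ : Fin M → ℝ, 0 ≤ μ → h μstar (B wbar) ≤ h μ (B wbar)) :
    ∀ ε : ℝ, 0 < ε → ∃ δ : ℝ, 0 < δ ∧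
      ∀ w : Fin p → ℝ, w ≠ wbar → l2norm (w - wbar) < δ →
        (Ω (B w)).Nonempty ∧
        -(ε * l2norm (w - wbar)) ≤
          V (B w) - V (B wbar) - Jᵀ.mulVec μstar ⬝ᵥ (w - wbar) := by
  intro ε hε
  set b : Fin M → ℝ := B wbar with hb
  set S : Matrix (Fin M) (Fin M) ℝ := A * Q⁻¹ * Aᵀ with hS
  set v : Fin M → ℝ := (A * Q⁻¹).mulVec c - (2 : ℝ) • b with hv
  -- basic facts about Q
  have hQdet : IsUnit Q.det := (ne_of_gt hQpd.det_pos).isUnit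
  have hQinv_symm : Q⁻¹ᵀ = Q⁻¹ := by
    rw [Matrix.transpose_nonsing_inv, hQsymm.eq]
  have hSsymm : Sᵀ = S := by
    rw [hS, Matrix.transpose_mul, Matrix.transpose_mul, Matrix.transpose_transpose,
      hQinv_symm, Matrix.mul_assoc]
  -- S is positive semidefinite in the quadratic-form sense
  have hSpsd : ∀ x : Fin M → ℝ, 0 ≤ x ⬝ᵥ S *ᵥ x := by
    intro x
    have h1 : S *ᵥ x = A *ᵥ (Q⁻¹ *ᵥ (Aᵀ *ᵥ x)) := by
      rw [Matrix.mulVec_mulVec, Matrix.mulVec_mulVec]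
    rw [h1, dot_mulVec_flip]
    exact psd_dot _ hQpd.inv.posSemidef _
  have hsymmdot : ∀ x y : Fin M → ℝ, x ⬝ᵥ S *ᵥ y = y ⬝ᵥ S *ᵥ x := by
    intro x y
    rw [dot_mulVec_flip, hSsymm, dotProduct_comm]
  -- quadratic expansion of h
  have hquad : ∀ d : Fin M → ℝ,
      h (μstar + d) b = h μstar b + (d ⬝ᵥ S *ᵥ μstar + v ⬝ᵥ d) / 2
        + (d ⬝ᵥ S *ᵥ d) / 4 := by
    intro d
    rw [hh, hh]
    rw [Matrix.mulVec_add, dotProduct_add, add_dotProduct,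
      add_dotProduct, dotProduct_add]
    have := hsymmdot μstar d
    rw [← hS, ← hv] at *
    ring_nf
    rw [this]
    ring
  -- KKT multiplier gradient
  set gv : Fin M → ℝ := fun i => ((S *ᵥ μstar) i + v i) / 2 with hgv
  have hkey : ∀ (i : Fin M) (t : ℝ), 0 ≤ μstar + Pi.single i t →
      0 ≤ t * gv i + t ^ 2 * S i i / 4 := by
    intro i t hpos
    have h1 := hμmin (μstar + Pi.single i t) hpos
    rw [hquad (Pi.single i t)] at h1
    have h2 : (Pi.single i t : Fin M → ℝ) ⬝ᵥ S *ᵥ μstar = t * (S *ᵥ μstar) i :=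
      single_dotProduct _ _ _
    have h3 : v ⬝ᵥ (Pi.single i t : Fin M → ℝ) = v i * t :=
      dotProduct_single _ _ _
    have h4 : (Pi.single i t : Fin M → ℝ) ⬝ᵥ S *ᵥ (Pi.single i t) = t ^ 2 * S i i := by
      rw [Matrix.mulVec_single, single_dotProduct]
      simp only [Pi.smul_apply, op_smul_eq_mul, Matrix.col_apply]
      ring_nf
    rw [h2, h3, h4] at h1
    rw [hgv]
    simp only
    linarith
  have hSdiag : ∀ i, 0 ≤ S i i := by
    intro i
    have := hSpsd (Pi.single i 1)
    rw [Matrix.mulVec_single, single_dotProduct, one_mul] at this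
    simpa [Matrix.col_apply] using this
  have hg_nonneg : ∀ i, 0 ≤ gv i := by
    intro i
    by_contra hneg
    push_neg at hneg
    set q := S i i with hq
    have hq0 : 0 ≤ q := hSdiag i
    set t : ℝ := -2 * gv i / (q + 1) with ht
    have ht0 : 0 < t := by
      apply div_pos (by linarith) (by linarith)
    have hpos : 0 ≤ μstar + Pi.single i t := by
      intro j
      by_cases hj : j = i
      · subst hj
        simp only [Pi.add_apply, Pi.single_eq_same]
        have := hμnonneg j
        simp only [Pi.zero_apply] at this ⊢
        linarith
      · simp only [Pi.add_apply, Pi.single_eq_of_ne hj]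
        simpa using hμnonneg j
    have hk := hkey i t hpos
    have htq : t * (q + 1) = -2 * gv i := by
      rw [ht]; field_simp
    nlinarith [sq_nonneg t, mul_pos ht0 ht0]
  have hcomp : ∀ i, μstar i * gv i = 0 := by
    intro i
    rcases eq_or_lt_of_le (hμnonneg i) with hz | hpos
    · have hz' : μstar i = 0 := by simpa using hz.symm
      rw [hz', zero_mul]
    rcases eq_or_lt_of_le (hg_nonneg i) with hz | hgpos
    · rw [← hz, mul_zero]
    exfalso
    set q := S i i with hq
    have hq0 : 0 ≤ q := hSdiag i
    set t : ℝ := -(min (μstar i) (2 * gv i / (q + 1))) with ht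
    have hmin_pos : 0 < min (μstar i) (2 * gv i / (q + 1)) :=
      lt_min hpos (div_pos (by linarith) (by linarith))
    have ht0 : t < 0 := by rw [ht]; linarith
    have hpos' : 0 ≤ μstar + Pi.single i t := by
      intro j
      by_cases hj : j = i
      · subst hj
        simp only [Pi.add_apply, Pi.single_eq_same, Pi.zero_apply]
        have h5 : min (μstar j) (2 * gv j / (q + 1)) ≤ μstar j := min_le_left _ _
        rw [ht]; linarith
      · simp only [Pi.add_apply, Pi.single_eq_of_ne hj]
        simpa using hμnonneg j
    have hk := hkey i t hpos'
    have hle : -t ≤ 2 * gv i / (q + 1) := by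
      rw [ht, neg_neg]; exact min_le_right _ _
    have hle' : -t * (q + 1) ≤ 2 * gv i := by
      rw [le_div_iff₀ (by linarith : (0:ℝ) < q + 1)] at hle
      linarith [hle]
    have hP1 : t * gv i < 0 := mul_neg_of_neg_of_pos ht0 hgpos
    have hP2 : (-t) * (-t * (q + 1)) ≤ (-t) * (2 * gv i) :=
      mul_le_mul_of_nonneg_left hle' (neg_nonneg.mpr (le_of_lt ht0))
    have hk' : 0 ≤ t * gv i + t ^ 2 * q / 4 := by rw [hq]; exact hk
    have hu : 0 < -t := neg_pos.mpr ht0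
    have e1 : t ^ 2 * q + t ^ 2 ≤ -2 * (t * gv i) := by nlinarith [hP2]
    have e2 : 0 < t ^ 2 := by nlinarith [mul_pos hu hu]
    clear_value q t
    linarith [hk', hP1, e1, e2]
  -- primal optimal point
  set νs : Fin N → ℝ := (-(1/2) : ℝ) • (Q⁻¹ *ᵥ (c + Aᵀ *ᵥ μstar)) with hνs
  have hQνs : c + Aᵀ *ᵥ μstar = (-2 : ℝ) • (Q *ᵥ νs) := by
    rw [hνs, Matrix.mulVec_smul, Matrix.mulVec_mulVec, Matrix.mul_nonsing_inv _ hQdet,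
      Matrix.one_mulVec, smul_smul]
    norm_num
  have hAνs : ∀ i, (A *ᵥ νs) i + b i = -gv i := by
    intro i
    have h1 : A *ᵥ νs = (-(1/2) : ℝ) • ((A * Q⁻¹) *ᵥ c + S *ᵥ μstar) := by
      rw [hνs]
      simp only [Matrix.mulVec_smul, Matrix.mulVec_add, Matrix.mulVec_mulVec, hS,
        Matrix.mul_assoc]
    rw [h1, hgv]
    simp only [Pi.smul_apply, Pi.add_apply, smul_eq_mul, hv, Pi.sub_apply,
      Pi.smul_apply, smul_eq_mul]
    ring
  have hΩb : (Ω b).Nonempty := by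
    rw [hΩ]
    exact ⟨νbar, fun i => le_of_lt (hstrict i)⟩
  have hνs_mem : νs ∈ Ω b := by
    rw [hΩ]
    intro i
    rw [hAνs i]
    simpa using hg_nonneg i
  -- Lagrangian minimality
  have hLag : ∀ ν : Fin N → ℝ,
      νs ⬝ᵥ Q *ᵥ νs + c ⬝ᵥ νs + (Aᵀ *ᵥ μstar) ⬝ᵥ νs ≤
      ν ⬝ᵥ Q *ᵥ ν + c ⬝ᵥ ν + (Aᵀ *ᵥ μstar) ⬝ᵥ ν := by
    intro ν
    have hpsd := psd_dot Q hQpd.posSemidef (ν - νs)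
    have hQsymdot : ∀ x y : Fin N → ℝ, x ⬝ᵥ Q *ᵥ y = y ⬝ᵥ Q *ᵥ x := by
      intro x y
      rw [dot_mulVec_flip, hQsymm.eq, dotProduct_comm]
    have hexp : (ν - νs) ⬝ᵥ Q *ᵥ (ν - νs) =
        ν ⬝ᵥ Q *ᵥ ν - 2 * (νs ⬝ᵥ Q *ᵥ ν) + νs ⬝ᵥ Q *ᵥ νs := by
      rw [Matrix.mulVec_sub, dotProduct_sub, sub_dotProduct,
        sub_dotProduct, hQsymdot νs ν]
      ring
    have hc : ∀ x : Fin N → ℝ, c ⬝ᵥ x + (Aᵀ *ᵥ μstar) ⬝ᵥ x = -2 * (νs ⬝ᵥ Q *ᵥ x) := by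
      intro x
      have h1 : (c + Aᵀ *ᵥ μstar) ⬝ᵥ x = ((-2 : ℝ) • (Q *ᵥ νs)) ⬝ᵥ x := by rw [hQνs]
      rw [add_dotProduct, smul_dotProduct] at h1
      rw [h1, smul_eq_mul]
      have h2 : (Q *ᵥ νs) ⬝ᵥ x = νs ⬝ᵥ Q *ᵥ x := by
        rw [dotProduct_comm, dot_mulVec_flip, hQsymm.eq, dotProduct_comm]
      rw [h2]
    have h1 := hc ν
    have h2 := hc νs
    have h3 := hQsymdot νs νs
    nlinarith [hpsd, hexp]
  -- weak duality / sensitivity inequality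
  have hVb_le : V b ≤ νs ⬝ᵥ Q *ᵥ νs + c ⬝ᵥ νs :=
    (hV b hΩb).2 ⟨νs, hνs_mem, rfl⟩
  have hμg : μstar ⬝ᵥ (fun i => -gv i) = 0 := by
    rw [dotProduct]
    apply Finset.sum_eq_zero
    intro i _
    have := hcomp i
    nlinarith [hcomp i]
  have hsens : ∀ b' : Fin M → ℝ, (Ω b').Nonempty →
      V b + μstar ⬝ᵥ (b' - b) ≤ V b' := by
    intro b' hne
    obtain ⟨ν', hν'mem, hν'eq⟩ := (hV b' hne).1
    have hfeas : ∀ i, (A *ᵥ ν') i + b' i ≤ 0 := by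
      rw [hΩ] at hν'mem; exact hν'mem
    have hdot_nonpos : μstar ⬝ᵥ (A *ᵥ ν' + b') ≤ 0 := by
      rw [dotProduct]
      apply Finset.sum_nonpos
      intro i _
      exact mul_nonpos_of_nonneg_of_nonpos (hμnonneg i) (hfeas i)
    have hμAν : ∀ x : Fin N → ℝ, μstar ⬝ᵥ (A *ᵥ x) = (Aᵀ *ᵥ μstar) ⬝ᵥ x := by
      intro x; exact dot_mulVec_flip A μstar x
    have hL := hLag ν'
    have hμAνs_b : μstar ⬝ᵥ (A *ᵥ νs + b) = 0 := by
      have : (A *ᵥ νs + b) = fun i => -gv i := by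
        funext i; exact hAνs i
      rw [this]; exact hμg
    have e1 : μstar ⬝ᵥ (A *ᵥ ν' + b') = (Aᵀ *ᵥ μstar) ⬝ᵥ ν' + μstar ⬝ᵥ b' := by
      rw [dotProduct_add, hμAν]
    have e2 : μstar ⬝ᵥ (A *ᵥ νs + b) = (Aᵀ *ᵥ μstar) ⬝ᵥ νs + μstar ⬝ᵥ b := by
      rw [dotProduct_add, hμAν]
    have e3 : μstar ⬝ᵥ (b' - b) = μstar ⬝ᵥ b' - μstar ⬝ᵥ b := dotProduct_sub _ _ _
    rw [← hν'eq]
    simp only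
    linarith
  -- continuity: nearby feasibility
  have hUopen : IsOpen {y : Fin M → ℝ | ∀ i, A.mulVec νbar i + y i < 0} := by
    have heq : {y : Fin M → ℝ | ∀ i, A.mulVec νbar i + y i < 0} =
        ⋂ i, (fun y : Fin M → ℝ => y i) ⁻¹' (Set.Iio (-(A.mulVec νbar i))) := by
      ext y
      simp only [Set.mem_setOf_eq, Set.mem_iInter, Set.mem_preimage, Set.mem_Iio]
      constructor <;> intro hy i <;> have := hy i <;> linarith
    rw [heq]
    exact isOpen_iInter_of_finite fun i => (continuous_apply i).isOpen_preimage _ isOpen_Iio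
  have hmem : {w : Fin p → ℝ | ∀ i, A.mulVec νbar i + B w i < 0} ∈ nhds wbar := by
    have := hB.continuousAt.preimage_mem_nhds (hUopen.mem_nhds (by exact hstrict))
    exact this
  obtain ⟨δ₁, hδ₁pos, hδ₁⟩ := Metric.mem_nhds_iff.mp hmem
  -- little-o: derivative estimate
  set Smu : ℝ := ∑ i, μstar i with hSmu
  have hSmu0 : 0 ≤ Smu := Finset.sum_nonneg fun i _ => hμnonneg i
  set ε' : ℝ := ε / (Smu + 1) with hε'
  have hε'pos : 0 < ε' := div_pos hε (by linarith)
  have hlo := hB.isLittleO.def hε'pos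
  rw [Metric.eventually_nhds_iff] at hlo
  obtain ⟨δ₂, hδ₂pos, hδ₂⟩ := hlo
  refine ⟨min δ₁ δ₂, lt_min hδ₁pos hδ₂pos, ?_⟩
  intro w hwne hwδ
  have hnorm_le : ‖w - wbar‖ ≤ l2norm (w - wbar) := l2norm_ge_norm _
  have hdist : dist w wbar < min δ₁ δ₂ := by
    rw [dist_eq_norm]; linarith
  have hdist1 : dist w wbar < δ₁ := lt_of_lt_of_le hdist (min_le_left _ _)
  have hdist2 : dist w wbar < δ₂ := lt_of_lt_of_le hdist (min_le_right _ _)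
  have hfeasw : ∀ i, A.mulVec νbar i + B w i < 0 := hδ₁ (Metric.mem_ball.mpr hdist1)
  have hΩw : (Ω (B w)).Nonempty := by
    rw [hΩ]
    exact ⟨νbar, fun i => le_of_lt (hfeasw i)⟩
  refine ⟨hΩw, ?_⟩
  -- derivative estimate
  have hest := hδ₂ hdist2
  simp only [LinearMap.coe_toContinuousLinearMap', Matrix.mulVecLin_apply] at hest
  set e : Fin M → ℝ := B w - b - J *ᵥ (w - wbar) with he
  have heb : ‖e‖ ≤ ε' * ‖w - wbar‖ := hest
  -- sensitivity applied
  have hs := hsens (B w) hΩw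
  -- transpose dot product
  have htr : Jᵀ.mulVec μstar ⬝ᵥ (w - wbar) = μstar ⬝ᵥ (J *ᵥ (w - wbar)) := by
    rw [← dot_mulVec_flip]
  have hsplit : μstar ⬝ᵥ (B w - b) = μstar ⬝ᵥ e + μstar ⬝ᵥ (J *ᵥ (w - wbar)) := by
    rw [he]
    rw [← dotProduct_add]
    congr 1
    funext i
    simp [sub_add_cancel]
  have hdl := dot_lower μstar e hμnonneg
  have hl2nn : 0 ≤ l2norm (w - wbar) := Real.sqrt_nonneg _
  have hbound : -(ε * l2norm (w - wbar)) ≤ μstar ⬝ᵥ e := by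
    have h1 : Smu * ‖e‖ ≤ Smu * (ε' * ‖w - wbar‖) :=
      mul_le_mul_of_nonneg_left heb hSmu0
    have h2 : ε' * ‖w - wbar‖ ≤ ε' * l2norm (w - wbar) :=
      mul_le_mul_of_nonneg_left hnorm_le (le_of_lt hε'pos)
    have h3 : Smu * (ε' * l2norm (w - wbar)) ≤ ε * l2norm (w - wbar) := by
      have h4 : Smu * ε' ≤ ε := by
        have h6 : ε' * (Smu + 1) = ε := by
          rw [hε']; field_simp
        nlinarith [h6, hε'pos]
      calc Smu * (ε' * l2norm (w - wbar)) = (Smu * ε') * l2norm (w - wbar) := by ring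
        _ ≤ ε * l2norm (w - wbar) := mul_le_mul_of_nonneg_right h4 hl2nn
    have h5 : Smu * (ε' * ‖w - wbar‖) ≤ Smu * (ε' * l2norm (w - wbar)) :=
      mul_le_mul_of_nonneg_left h2 hSmu0
    linarith
  rw [htr]
  linarith [hbound, hs, hsplit]
end
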